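/- arXiv:0801.0007 — 3 statements merged into one kernel-verified Lean document; each statement's English description precedes it below -/
import Mathlib

section
/- Let X and Y be nonempty finite T₀-spaces. The non-Hausdorff join X ⊕ Y is contractible (homotopy equivalent, as a topological space, to a one-point space) if and only if X is contractible or Y is contractible. -/
/-!
STATEMENT 0: Let X and Y be nonempty finite T₀-spaces. The non-Hausdorff join X ⊕ Y is
contractible iff X is contractible or Y is contractible.

A finite T₀-space is identified with a finite poset, topologized with the down-set
(Alexandrov) topology. The non-Hausdorff join is the ordered sum `X ⊕ₗ Y` (every point of
X below every point of Y), again with the down-set topology.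
-/

noncomputable section

/-- The Alexandrov "down-set" topology on a poset: open sets are the lower sets. Under the
correspondence between finite `T₀`-spaces and finite posets, this is the topology whose
specialization order is the given order (`U_x = {y : y ≤ x}` is the minimal open set of `x`). -/
def downTop (X : Type*) [Preorder X] : TopologicalSpace X := Topology.lowerSet X

open Relation

/-- Two order homs are comparable. -/
def fenceRel (P : Type*) [Preorder P] (f g : P →o P) : Prop := f ≤ g ∨ g ≤ f

/-- Order-theoretic contractibility: a fence of monotone self-maps from the identity
to a constant map. -/
def FenceContr (P : Type*) [Preorder P] : Prop :=
  ∃ c : P, Relation.ReflTransGen (fenceRel P) OrderHom.id (OrderHom.const P c)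

lemma FenceContr.retract {P Q : Type*} [Preorder P] [Preorder Q] (i : Q →o P) (r : P →o Q)
    (hri : ∀ q, r (i q) = q) : FenceContr P → FenceContr Q := by
  rintro ⟨c, hc⟩
  refine ⟨r c, ?_⟩
  have h2 := ReflTransGen.lift (p := fenceRel Q) (r := fenceRel P) (fun g : P →o P => (r.comp g).comp i)
    (fun a b hab => hab.imp (fun h q => r.monotone (h (i q))) (fun h q => r.monotone (h (i q))))
    _ _ hc
  have e1 : (r.comp (OrderHom.id)).comp i = OrderHom.id := by ext q; exact hri q
  have e2 : (r.comp (OrderHom.const P c)).comp i = OrderHom.const Q (r c) := rfl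
  simpa only [Function.onFun, e1, e2] using h2

lemma FenceContr.extend {P Q : Type*} [Preorder P] [Preorder Q] (i : Q →o P) (r : P →o Q)
    (hir : fenceRel P (i.comp r) OrderHom.id) : FenceContr Q → FenceContr P := by
  rintro ⟨c, hc⟩
  refine ⟨i c, ?_⟩
  have h2 := ReflTransGen.lift (p := fenceRel P) (r := fenceRel Q) (fun g : Q →o Q => (i.comp g).comp r)
    (fun a b hab => hab.imp (fun h q => i.monotone (h (r q))) (fun h q => i.monotone (h (r q))))
    _ _ hc
  have e1 : (i.comp (OrderHom.id)).comp r = i.comp r := rfl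
  have e2 : (i.comp (OrderHom.const Q c)).comp r = OrderHom.const P (i c) := rfl
  simp only [Function.onFun, e1, e2] at h2
  exact ReflTransGen.head hir.symm h2

/-- A beat point of a finite poset. -/
def IsBeat (P : Type*) [PartialOrder P] (x : P) : Prop :=
  (∃ m, m < x ∧ ∀ y, y < x → y ≤ m) ∨ (∃ m, x < m ∧ ∀ y, x < y → m ≤ y)

lemma fenceContr_compl_iff {P : Type*} [PartialOrder P] [DecidableEq P] {x : P}
    (hb : IsBeat P x) : FenceContr P ↔ FenceContr {y : P // y ≠ x} := by
  obtain ⟨m, hmx, hmax⟩ | ⟨m, hxm, hmin⟩ := hb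
  · have hm : m ≠ x := ne_of_lt hmx
    set i : {y : P // y ≠ x} →o P := ⟨Subtype.val, fun a b h => h⟩ with hi
    set r : P →o {y : P // y ≠ x} :=
      ⟨fun y => if h : y = x then ⟨m, hm⟩ else ⟨y, h⟩, by
        intro a b hab
        by_cases ha : a = x <;> by_cases hbx : b = x <;>
          simp only [dif_pos, dif_neg, ha, hbx]
        · exact le_refl _
        · subst ha
          show m ≤ b
          exact hmx.le.trans hab
        · subst hbx
          show a ≤ m
          exact hmax a (lt_of_le_of_ne hab ha)
        · exact hab⟩ with hr
    have hri : ∀ q, r (i q) = q := by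
      rintro ⟨q, hq⟩
      exact dif_neg hq
    have hir : fenceRel P (i.comp r) OrderHom.id := by
      refine Or.inl fun y => ?_
      show (if h : y = x then (⟨m, hm⟩ : {y : P // y ≠ x}) else ⟨y, h⟩).val ≤ y
      split
      · next h => subst h; exact hmx.le
      · exact le_refl _
    exact ⟨fun h => h.retract i r hri, fun h => h.extend i r hir⟩
  · have hm : m ≠ x := (ne_of_lt hxm).symm
    set i : {y : P // y ≠ x} →o P := ⟨Subtype.val, fun a b h => h⟩ with hi
    set r : P →o {y : P // y ≠ x} :=
      ⟨fun y => if h : y = x then ⟨m, hm⟩ else ⟨y, h⟩, by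
        intro a b hab
        by_cases ha : a = x <;> by_cases hbx : b = x <;>
          simp only [dif_pos, dif_neg, ha, hbx]
        · exact le_refl _
        · subst ha
          show m ≤ b
          exact hmin b (lt_of_le_of_ne hab (Ne.symm hbx))
        · subst hbx
          show a ≤ m
          exact hab.trans hxm.le
        · exact hab⟩ with hr
    have hri : ∀ q, r (i q) = q := by
      rintro ⟨q, hq⟩
      exact dif_neg hq
    have hir : fenceRel P (i.comp r) OrderHom.id := by
      refine Or.inr fun y => ?_
      show y ≤ (if h : y = x then (⟨m, hm⟩ : {y : P // y ≠ x}) else ⟨y, h⟩).val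
      split
      · next h => subst h; exact hxm.le
      · exact le_refl _
    exact ⟨fun h => h.retract i r hri, fun h => h.extend i r hir⟩

lemma eq_id_of_le_id {P : Type*} [PartialOrder P] [Fintype P] (hno : ∀ x : P, ¬ IsBeat P x)
    (f : P →o P) (h : f ≤ OrderHom.id) : f = OrderHom.id := by
  classical
  by_contra hne
  have hs : (Finset.univ.filter (fun x : P => f x ≠ x)).Nonempty := by
    by_contra h'
    rw [Finset.not_nonempty_iff_eq_empty, Finset.filter_eq_empty_iff] at h'
    exact hne (OrderHom.ext _ _ (funext fun x => not_not.1 (h' (Finset.mem_univ x))))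
  obtain ⟨a, hmin⟩ := Finset.exists_minimal hs
  have ha : a ∈ Finset.univ.filter (fun x : P => f x ≠ x) := hmin.1
  have hamin : ∀ y ∈ Finset.univ.filter (fun x : P => f x ≠ x), ¬ y < a :=
    fun y hy hlt => lt_irrefl _ (hlt.trans_le (hmin.2 hy hlt.le))
  rw [Finset.mem_filter] at ha
  have hfa : f a < a := lt_of_le_of_ne (h a) ha.2
  refine hno a (Or.inl ⟨f a, hfa, fun y hy => ?_⟩)
  have hyy : f y = y := by
    by_contra hyne
    exact hamin y (Finset.mem_filter.2 ⟨Finset.mem_univ y, hyne⟩) hy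
  calc y = f y := hyy.symm
    _ ≤ f a := f.monotone hy.le

lemma eq_id_of_id_le {P : Type*} [PartialOrder P] [Fintype P] (hno : ∀ x : P, ¬ IsBeat P x)
    (f : P →o P) (h : OrderHom.id ≤ f) : f = OrderHom.id := by
  classical
  by_contra hne
  have hs : (Finset.univ.filter (fun x : P => f x ≠ x)).Nonempty := by
    by_contra h'
    rw [Finset.not_nonempty_iff_eq_empty, Finset.filter_eq_empty_iff] at h'
    exact hne (OrderHom.ext _ _ (funext fun x => not_not.1 (h' (Finset.mem_univ x))))
  obtain ⟨a, hmax⟩ := Finset.exists_maximal hs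
  have ha : a ∈ Finset.univ.filter (fun x : P => f x ≠ x) := hmax.1
  have hamax : ∀ y ∈ Finset.univ.filter (fun x : P => f x ≠ x), ¬ a < y :=
    fun y hy hlt => lt_irrefl _ (hlt.trans_le (hmax.2 hy hlt.le))
  rw [Finset.mem_filter] at ha
  have hfa : a < f a := lt_of_le_of_ne (h a) (Ne.symm ha.2)
  refine hno a (Or.inr ⟨f a, hfa, fun y hy => ?_⟩)
  have hyy : f y = y := by
    by_contra hyne
    exact hamax y (Finset.mem_filter.2 ⟨Finset.mem_univ y, hyne⟩) hy
  calc f a ≤ f y := f.monotone hy.le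
    _ = y := hyy

lemma fence_eq_id {P : Type*} [PartialOrder P] [Fintype P] (hno : ∀ x : P, ¬ IsBeat P x)
    {f : P →o P} (h : ReflTransGen (fenceRel P) OrderHom.id f) : f = OrderHom.id := by
  induction h with
  | refl => rfl
  | tail hab hbc ih =>
    rw [ih] at hbc
    rcases hbc with h' | h'
    · exact eq_id_of_id_le hno _ h'
    · exact eq_id_of_le_id hno _ h'

lemma exists_beat {P : Type*} [PartialOrder P] [Fintype P] (h : FenceContr P)
    (hc : 1 < Fintype.card P) : ∃ x, IsBeat P x := by
  by_contra hno
  push_neg at hno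
  obtain ⟨c, hc'⟩ := h
  have heq := fence_eq_id hno hc'
  obtain ⟨a, b, hab⟩ := Fintype.exists_pair_of_one_lt_card hc
  have hA : c = a := DFunLike.congr_fun heq a
  have hB : c = b := DFunLike.congr_fun heq b
  exact hab (hA ▸ hB)

section Topo

variable {P Q : Type*} [Preorder P] [Preorder Q]

lemma downTop_isLowerSet : @Topology.IsLowerSet P (downTop P) _ := by
  letI := downTop P
  exact ⟨rfl⟩

lemma downTop_continuous_iff {f : P → Q} :
    @Continuous P Q (downTop P) (downTop Q) f ↔ Monotone f := by
  letI := downTop P; letI := downTop Q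
  haveI : Topology.IsLowerSet P := downTop_isLowerSet
  haveI : Topology.IsLowerSet Q := downTop_isLowerSet
  exact (Topology.IsLowerSet.monotone_iff_continuous).symm

/-- A monotone map as a continuous map for the down-set topologies. -/
def toCont (f : P →o Q) : @ContinuousMap P Q (downTop P) (downTop Q) :=
  letI := downTop P
  letI := downTop Q
  { toFun := f, continuous_toFun := downTop_continuous_iff.2 f.monotone }

lemma homotopic_of_le {f g : P →o P} (h : f ≤ g) :
    @ContinuousMap.Homotopic P P (downTop P) (downTop P) (toCont f) (toCont g) := by
  letI := downTop P
  haveI : Topology.IsLowerSet P := downTop_isLowerSet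
  have h01 : (0 : unitInterval) ≠ 1 := fun h => by
    simpa using congrArg Subtype.val h
  refine ⟨⟨⟨fun p => if p.1 = 1 then g p.2 else f p.2, ?_⟩, ?_, ?_⟩⟩
  · rw [continuous_def]
    intro U hU
    have hL : IsLowerSet U := (Topology.IsLowerSet.isOpen_iff_isLowerSet).1 hU
    have heq : (fun p : unitInterval × P => if p.1 = 1 then g p.2 else f p.2) ⁻¹' U =
        (Set.univ ×ˢ (f ⁻¹' U)) ∩
          ((({1} : Set unitInterval)ᶜ ×ˢ Set.univ) ∪ (Set.univ ×ˢ (g ⁻¹' U))) := by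
      ext ⟨t, x⟩
      by_cases ht : t = 1
      · simp only [Set.mem_preimage, Set.mem_inter_iff, Set.mem_prod, Set.mem_univ,
          Set.mem_union, Set.mem_compl_iff, Set.mem_singleton_iff, ht, if_pos,
          true_and, and_true, not_true, false_or]
        exact ⟨fun hg => ⟨hL (h x) hg, hg⟩, fun hg => hg.2⟩
      · simp [ht]
    rw [heq]
    exact ((isOpen_univ.prod ((toCont f).continuous.isOpen_preimage U hU))).inter
      (((isOpen_compl_iff.2 isClosed_singleton).prod isOpen_univ).union
        (isOpen_univ.prod ((toCont g).continuous.isOpen_preimage U hU)))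
  · intro x
    show (if (0 : unitInterval) = 1 then g x else f x) = (toCont f) x
    rw [if_neg h01]
    rfl
  · intro x
    show (if (1 : unitInterval) = 1 then g x else f x) = (toCont g) x
    rw [if_pos rfl]
    rfl

lemma fence_homotopic {f g : P →o P} (h : Relation.ReflTransGen (fenceRel P) f g) :
    @ContinuousMap.Homotopic P P (downTop P) (downTop P) (toCont f) (toCont g) := by
  letI := downTop P
  induction h with
  | refl => exact ContinuousMap.Homotopic.refl _
  | tail _ hbc ih =>
    refine ih.trans ?_
    rcases hbc with h' | h'
    · exact homotopic_of_le h'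
    · exact (homotopic_of_le h').symm

end Topo

lemma contractible_iff_fenceContr (P : Type*) [PartialOrder P] [Fintype P] :
    @ContractibleSpace P (downTop P) ↔ FenceContr P := by
  letI := downTop P
  haveI : Topology.IsLowerSet P := downTop_isLowerSet
  rw [contractible_iff_id_nullhomotopic]
  constructor
  · rintro ⟨c, ⟨H⟩⟩
    have hslice : ∀ t : unitInterval, Monotone (fun x : P => H (t, x)) := fun t =>
      downTop_continuous_iff.1 (H.continuous.comp (Continuous.prodMk_right t))
    set F : unitInterval → (P →o P) := fun t => ⟨fun x => H (t, x), hslice t⟩ with hF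
    have key : ∀ t : unitInterval, ∃ A : Set unitInterval,
        IsOpen A ∧ t ∈ A ∧ ∀ s ∈ A, F s ≤ F t := by
      intro t
      have h1 : ∀ x : P, ∃ A : Set unitInterval,
          IsOpen A ∧ t ∈ A ∧ ∀ s ∈ A, H (s, x) ≤ H (t, x) := by
        intro x
        have hU : IsOpen {z : P | z ≤ H (t, x)} :=
          (Topology.IsLowerSet.isOpen_iff_isLowerSet).2 fun a b hba ha => le_trans hba ha
        have hpre : IsOpen ((⇑H) ⁻¹' {z : P | z ≤ H (t, x)}) :=
          H.continuous.isOpen_preimage _ hU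
        obtain ⟨A, B, hA, hB, htA, hxB, hsub⟩ := isOpen_prod_iff.1 hpre t x (le_refl _)
        exact ⟨A, hA, htA, fun s hs => hsub (Set.mk_mem_prod hs hxB)⟩
      choose A hAo hAt hAs using h1
      exact ⟨⋂ x, A x, isOpen_iInter_of_finite hAo, Set.mem_iInter.2 hAt,
        fun s hs x => hAs x s (Set.mem_iInter.1 hs x)⟩
    set S : Set unitInterval := {t | Relation.ReflTransGen (fenceRel P) (F 0) (F t)} with hS
    have hSopen : IsOpen S := by
      rw [isOpen_iff_forall_mem_open]
      intro t ht
      obtain ⟨A, hAo, hAt, hAs⟩ := key t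
      exact ⟨A, fun s hs => Relation.ReflTransGen.tail ht (Or.inr (hAs s hs)), hAo, hAt⟩
    have hScopen : IsOpen Sᶜ := by
      rw [isOpen_iff_forall_mem_open]
      intro t ht
      obtain ⟨A, hAo, hAt, hAs⟩ := key t
      refine ⟨A, fun s hs hsS => ht ?_, hAo, hAt⟩
      exact Relation.ReflTransGen.tail hsS (Or.inl (hAs s hs))
    have hclopen : IsClopen S := ⟨isOpen_compl_iff.1 hScopen, hSopen⟩
    have hone : (1 : unitInterval) ∈ S := by
      rcases isClopen_iff.1 hclopen with h' | h'
      · exfalso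
        have h0 : (0 : unitInterval) ∈ S := Relation.ReflTransGen.refl
        rw [h'] at h0
        exact h0
      · rw [h']; trivial
    have hF0 : F 0 = OrderHom.id := by
      ext x
      exact H.apply_zero x
    have hF1 : F 1 = OrderHom.const P c := by
      ext x
      exact H.apply_one x
    exact ⟨c, by rw [← hF0, ← hF1]; exact hone⟩
  · rintro ⟨c, hc⟩
    refine ⟨c, ?_⟩
    have h := fence_homotopic hc
    have e1 : toCont (OrderHom.id : P →o P) = ContinuousMap.id P := by ext x; rfl
    have e2 : toCont (OrderHom.const P c) = ContinuousMap.const P c := by ext x; rfl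
    rwa [e1, e2] at h

section Join

variable {X Y : Type*} [PartialOrder X] [PartialOrder Y]

/-- Extend a self-map of `X` to the join, acting as identity on `Y`. -/
def mapLeft (f : X →o X) : (X ⊕ₗ Y) →o (X ⊕ₗ Y) where
  toFun z := toLex (Sum.map f id (ofLex z))
  monotone' := by
    intro a b h
    rcases a with a | a <;> rcases b with b | b
    · exact Sum.Lex.inl_le_inl_iff.2 (f.monotone (Sum.Lex.inl_le_inl_iff.1 h))
    · exact Sum.Lex.inl_le_inr _ _
    · exact absurd h Sum.Lex.not_inr_le_inl
    · exact h

/-- Extend a self-map of `Y` to the join, acting as identity on `X`. -/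
def mapRight (f : Y →o Y) : (X ⊕ₗ Y) →o (X ⊕ₗ Y) where
  toFun z := toLex (Sum.map id f (ofLex z))
  monotone' := by
    intro a b h
    rcases a with a | a <;> rcases b with b | b
    · exact h
    · exact Sum.Lex.inl_le_inr _ _
    · exact absurd h Sum.Lex.not_inr_le_inl
    · exact Sum.Lex.inr_le_inr_iff.2 (f.monotone (Sum.Lex.inr_le_inr_iff.1 h))

lemma fenceContr_join_of_left (h : FenceContr X) : FenceContr (X ⊕ₗ Y) := by
  obtain ⟨c, hc⟩ := h
  refine ⟨toLex (Sum.inl c), ?_⟩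
  have key : ∀ (a b : X →o X), a ≤ b → mapLeft (Y := Y) a ≤ mapLeft b := by
    intro a b h z
    rcases z with x | y
    · exact Sum.Lex.inl_le_inl_iff.2 (h x)
    · exact le_refl _
  have hlift : ∀ a b : X →o X, fenceRel X a b →
      fenceRel (X ⊕ₗ Y) (mapLeft a) (mapLeft b) :=
    fun a b hab => hab.imp (key a b) (key b a)
  have h2 := Relation.ReflTransGen.lift (p := fenceRel (X ⊕ₗ Y))
    (fun f : X →o X => mapLeft (Y := Y) f) hlift _ _ hc
  have e1 : mapLeft (Y := Y) (OrderHom.id : X →o X) = OrderHom.id := by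
    ext z; rcases z with x | y <;> rfl
  simp only [Function.onFun, e1] at h2
  refine h2.tail (Or.inr fun z => ?_)
  rcases z with x | y
  · exact le_refl _
  · exact Sum.Lex.inl_le_inr _ _

lemma fenceContr_join_of_right (h : FenceContr Y) : FenceContr (X ⊕ₗ Y) := by
  obtain ⟨c, hc⟩ := h
  refine ⟨toLex (Sum.inr c), ?_⟩
  have key : ∀ (a b : Y →o Y), a ≤ b → mapRight (X := X) a ≤ mapRight b := by
    intro a b h z
    rcases z with x | y
    · exact le_refl _
    · exact Sum.Lex.inr_le_inr_iff.2 (h y)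
  have hlift : ∀ a b : Y →o Y, fenceRel Y a b →
      fenceRel (X ⊕ₗ Y) (mapRight a) (mapRight b) :=
    fun a b hab => hab.imp (key a b) (key b a)
  have h2 := Relation.ReflTransGen.lift (p := fenceRel (X ⊕ₗ Y))
    (fun f : Y →o Y => mapRight (X := X) f) hlift _ _ hc
  have e1 : mapRight (X := X) (OrderHom.id : Y →o Y) = OrderHom.id := by
    ext z; rcases z with x | y <;> rfl
  simp only [Function.onFun, e1] at h2
  refine h2.tail (Or.inl fun z => ?_)
  rcases z with x | y
  · exact Sum.Lex.inl_le_inr _ _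
  · exact le_refl _

/-- Removing a point of `X` from the join, forward map. -/
def joinEraseL (x : X) :
    ({x' : X // x' ≠ x} ⊕ₗ Y) →o {z : X ⊕ₗ Y // z ≠ toLex (Sum.inl x)} where
  toFun z :=
    match ofLex z with
    | Sum.inl a => ⟨toLex (Sum.inl a.val), fun h => a.2 (by simpa using h)⟩
    | Sum.inr y => ⟨toLex (Sum.inr y), fun h => by simpa using h⟩
  monotone' := by
    intro a b h
    rcases a with a | a <;> rcases b with b | b
    · exact Sum.Lex.inl_le_inl_iff.2 (Subtype.coe_le_coe.2 (Sum.Lex.inl_le_inl_iff.1 h))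
    · exact Sum.Lex.inl_le_inr _ _
    · exact absurd h Sum.Lex.not_inr_le_inl
    · exact Sum.Lex.inr_le_inr_iff.2 (Sum.Lex.inr_le_inr_iff.1 h)

/-- Removing a point of `X` from the join, backward map. -/
def joinEraseLInv (x : X) :
    {z : X ⊕ₗ Y // z ≠ toLex (Sum.inl x)} →o ({x' : X // x' ≠ x} ⊕ₗ Y) where
  toFun z :=
    match hz : ofLex z.val with
    | Sum.inl a => toLex (Sum.inl ⟨a, fun e => z.2 (by rw [e] at hz; exact congrArg toLex hz)⟩)
    | Sum.inr y => toLex (Sum.inr y)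
  monotone' := by
    rintro ⟨za, ha⟩ ⟨zb, hb⟩ h
    replace h := Subtype.coe_le_coe.2 h
    rcases za with a | a <;> rcases zb with b | b
    · exact Sum.Lex.inl_le_inl_iff.2 (Subtype.mk_le_mk.2 (Sum.Lex.inl_le_inl_iff.1 h))
    · exact Sum.Lex.inl_le_inr _ _
    · exact absurd h Sum.Lex.not_inr_le_inl
    · exact Sum.Lex.inr_le_inr_iff.2 (Sum.Lex.inr_le_inr_iff.1 h)

lemma joinEraseL_left_inv (x : X) (q : {x' : X // x' ≠ x} ⊕ₗ Y) :
    joinEraseLInv (Y := Y) x (joinEraseL x q) = q := by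
  rcases q with a | y
  · rfl
  · rfl

lemma joinEraseL_right_inv (x : X) (p : {z : X ⊕ₗ Y // z ≠ toLex (Sum.inl x)}) :
    joinEraseL (Y := Y) x (joinEraseLInv x p) = p := by
  obtain ⟨z, hz⟩ := p
  rcases z with a | y
  · rfl
  · rfl

/-- Removing a point of `Y` from the join, forward map. -/
def joinEraseR (y : Y) :
    (X ⊕ₗ {y' : Y // y' ≠ y}) →o {z : X ⊕ₗ Y // z ≠ toLex (Sum.inr y)} where
  toFun z :=
    match ofLex z with
    | Sum.inl a => ⟨toLex (Sum.inl a), fun h => by simpa using h⟩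
    | Sum.inr b => ⟨toLex (Sum.inr b.val), fun h => b.2 (by simpa using h)⟩
  monotone' := by
    intro a b h
    rcases a with a | a <;> rcases b with b | b
    · exact Sum.Lex.inl_le_inl_iff.2 (Sum.Lex.inl_le_inl_iff.1 h)
    · exact Sum.Lex.inl_le_inr _ _
    · exact absurd h Sum.Lex.not_inr_le_inl
    · exact Sum.Lex.inr_le_inr_iff.2 (Subtype.coe_le_coe.2 (Sum.Lex.inr_le_inr_iff.1 h))

/-- Removing a point of `Y` from the join, backward map. -/
def joinEraseRInv (y : Y) :
    {z : X ⊕ₗ Y // z ≠ toLex (Sum.inr y)} →o (X ⊕ₗ {y' : Y // y' ≠ y}) where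
  toFun z :=
    match hz : ofLex z.val with
    | Sum.inl a => toLex (Sum.inl a)
    | Sum.inr b => toLex (Sum.inr ⟨b, fun e => z.2 (by rw [e] at hz; exact congrArg toLex hz)⟩)
  monotone' := by
    rintro ⟨za, ha⟩ ⟨zb, hb⟩ h
    replace h := Subtype.coe_le_coe.2 h
    rcases za with a | a <;> rcases zb with b | b
    · exact Sum.Lex.inl_le_inl_iff.2 (Sum.Lex.inl_le_inl_iff.1 h)
    · exact Sum.Lex.inl_le_inr _ _
    · exact absurd h Sum.Lex.not_inr_le_inl
    · exact Sum.Lex.inr_le_inr_iff.2 (Subtype.mk_le_mk.2 (Sum.Lex.inr_le_inr_iff.1 h))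

lemma joinEraseR_left_inv (y : Y) (q : X ⊕ₗ {y' : Y // y' ≠ y}) :
    joinEraseRInv (X := X) y (joinEraseR y q) = q := by
  rcases q with a | b
  · rfl
  · rfl

lemma joinEraseR_right_inv (y : Y) (p : {z : X ⊕ₗ Y // z ≠ toLex (Sum.inr y)}) :
    joinEraseR (X := X) y (joinEraseRInv y p) = p := by
  obtain ⟨z, hz⟩ := p
  rcases z with a | b
  · rfl
  · rfl

end Join

lemma join_fence_forward : ∀ n : ℕ, ∀ (X Y : Type) [PartialOrder X] [Fintype X]
    [PartialOrder Y] [Fintype Y] [Nonempty X] [Nonempty Y],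
    Fintype.card X + Fintype.card Y ≤ n → FenceContr (X ⊕ₗ Y) →
    FenceContr X ∨ FenceContr Y := by
  intro n
  induction n with
  | zero =>
    intro X Y _ _ _ _ _ _ hn _
    have hX : 0 < Fintype.card X := Fintype.card_pos
    omega
  | succ n ih =>
    intro X Y _ _ _ _ _ _ hn hJ
    classical
    have hcard : 1 < Fintype.card (X ⊕ₗ Y) := by
      have h1 : Fintype.card (X ⊕ₗ Y) = Fintype.card X + Fintype.card Y := by
        rw [← Fintype.card_sum]
        exact Fintype.card_congr (ofLex : X ⊕ₗ Y ≃ (X ⊕ Y))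
      have hX : 0 < Fintype.card X := Fintype.card_pos
      have hY : 0 < Fintype.card Y := Fintype.card_pos
      omega
    obtain ⟨p, hp⟩ := exists_beat hJ hcard
    rcases p with px | py
    · -- the beat point is in X
      have hstep : IsBeat X px → FenceContr X ∨ FenceContr Y := by
        intro hbX
        have hbJ : IsBeat (X ⊕ₗ Y) (toLex (Sum.inl px)) := hp
        haveI : Nonempty {x' : X // x' ≠ px} := by
          rcases hbX with ⟨m, hm, _⟩ | ⟨m, hm, _⟩
          · exact ⟨⟨m, ne_of_lt hm⟩⟩
          · exact ⟨⟨m, (ne_of_lt hm).symm⟩⟩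
        have h1 : FenceContr {z : X ⊕ₗ Y // z ≠ toLex (Sum.inl px)} :=
          (fenceContr_compl_iff hbJ).1 hJ
        have h2 : FenceContr ({x' : X // x' ≠ px} ⊕ₗ Y) :=
          h1.retract (joinEraseL px) (joinEraseLInv px) (joinEraseL_left_inv px)
        have hlt : Fintype.card {x' : X // x' ≠ px} < Fintype.card X :=
          Fintype.card_subtype_lt (x := px) (by simp)
        have hle : Fintype.card {x' : X // x' ≠ px} + Fintype.card Y ≤ n := by omega
        rcases ih {x' : X // x' ≠ px} Y hle h2 with h | h
        · exact Or.inl ((fenceContr_compl_iff hbX).2 h)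
        · exact Or.inr h
      rcases hp with ⟨m, hm, hmax⟩ | ⟨m, hm, hmin⟩
      · rcases m with mx | my
        · refine hstep (Or.inl ⟨mx, Sum.Lex.inl_lt_inl_iff.1 hm, fun y hy => ?_⟩)
          exact Sum.Lex.inl_le_inl_iff.1
            (hmax (toLex (Sum.inl y)) (Sum.Lex.inl_lt_inl_iff.2 hy))
        · exact absurd hm Sum.Lex.not_inr_lt_inl
      · rcases m with mx | my
        · refine hstep (Or.inr ⟨mx, Sum.Lex.inl_lt_inl_iff.1 hm, fun y hy => ?_⟩)
          exact Sum.Lex.inl_le_inl_iff.1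
            (hmin (toLex (Sum.inl y)) (Sum.Lex.inl_lt_inl_iff.2 hy))
        · -- `my` is a bottom element of `Y`
          refine Or.inr ⟨my, Relation.ReflTransGen.single (Or.inr fun y => ?_)⟩
          exact Sum.Lex.inr_le_inr_iff.1
            (hmin (toLex (Sum.inr y)) (Sum.Lex.inl_lt_inr _ _))
    · -- the beat point is in Y
      have hstep : IsBeat Y py → FenceContr X ∨ FenceContr Y := by
        intro hbY
        have hbJ : IsBeat (X ⊕ₗ Y) (toLex (Sum.inr py)) := hp
        haveI : Nonempty {y' : Y // y' ≠ py} := by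
          rcases hbY with ⟨m, hm, _⟩ | ⟨m, hm, _⟩
          · exact ⟨⟨m, ne_of_lt hm⟩⟩
          · exact ⟨⟨m, (ne_of_lt hm).symm⟩⟩
        have h1 : FenceContr {z : X ⊕ₗ Y // z ≠ toLex (Sum.inr py)} :=
          (fenceContr_compl_iff hbJ).1 hJ
        have h2 : FenceContr (X ⊕ₗ {y' : Y // y' ≠ py}) :=
          h1.retract (joinEraseR py) (joinEraseRInv py) (joinEraseR_left_inv py)
        have hlt : Fintype.card {y' : Y // y' ≠ py} < Fintype.card Y :=
          Fintype.card_subtype_lt (x := py) (by simp)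
        have hle : Fintype.card X + Fintype.card {y' : Y // y' ≠ py} ≤ n := by omega
        rcases ih X {y' : Y // y' ≠ py} hle h2 with h | h
        · exact Or.inl h
        · exact Or.inr ((fenceContr_compl_iff hbY).2 h)
      rcases hp with ⟨m, hm, hmax⟩ | ⟨m, hm, hmin⟩
      · rcases m with mx | my
        · -- `mx` is a top element of `X`
          refine Or.inl ⟨mx, Relation.ReflTransGen.single (Or.inl fun x => ?_)⟩
          exact Sum.Lex.inl_le_inl_iff.1
            (hmax (toLex (Sum.inl x)) (Sum.Lex.inl_lt_inr _ _))
        · refine hstep (Or.inl ⟨my, Sum.Lex.inr_lt_inr_iff.1 hm, fun y hy => ?_⟩)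
          exact Sum.Lex.inr_le_inr_iff.1
            (hmax (toLex (Sum.inr y)) (Sum.Lex.inr_lt_inr_iff.2 hy))
      · rcases m with mx | my
        · exact absurd hm Sum.Lex.not_inr_lt_inl
        · refine hstep (Or.inr ⟨my, Sum.Lex.inr_lt_inr_iff.1 hm, fun y hy => ?_⟩)
          exact Sum.Lex.inr_le_inr_iff.1
            (hmin (toLex (Sum.inr y)) (Sum.Lex.inr_lt_inr_iff.2 hy))

theorem join_contractible_iff (X Y : Type) [PartialOrder X] [Fintype X]
    [PartialOrder Y] [Fintype Y] [Nonempty X] [Nonempty Y] :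
    @ContractibleSpace (X ⊕ₗ Y) (downTop (X ⊕ₗ Y)) ↔
      @ContractibleSpace X (downTop X) ∨ @ContractibleSpace Y (downTop Y) := by
  rw [contractible_iff_fenceContr, contractible_iff_fenceContr, contractible_iff_fenceContr]
  constructor
  · exact join_fence_forward (Fintype.card X + Fintype.card Y) X Y le_rfl
  · rintro (h | h)
    · exact fenceContr_join_of_left h
    · exact fenceContr_join_of_right h
end
end

section
/- If x is a beat point of a finite T₀-space X, then the order complex K(X) simplicially collapses to K(X ∖ {x}). In particular, if X is contractible, then K(X) is collapsible. -/
/-!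
STATEMENT 3: If x is a beat point of a finite T₀-space X, then the order complex K(X)
simplicially collapses to K(X ∖ {x}).  In particular, if X is contractible, then K(X) is
collapsible.

A finite T₀-space is identified with a finite poset (down-set topology).  The order
complex is the simplicial complex of nonempty chains, encoded as a finite set of finite
simplices with vertex type X; K(X ∖ {x}) is its subcomplex of chains avoiding x.
-/

noncomputable section

/-- `x` is a down beat point if the set of points strictly below it has a maximum, and an
up beat point if the set of points strictly above it has a minimum. -/
def IsBeatPoint {X : Type*} [PartialOrder X] (x : X) : Prop :=
  (∃ m, m < x ∧ ∀ y, y < x → y ≤ m) ∨ (∃ m, x < m ∧ ∀ y, x < y → m ≤ y)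

/-- Elementary simplicial collapse: remove a free pair `(σ, τ)`, where `τ` is a proper
face of `σ` and of no other simplex of `K`. -/
def ElemSCollapse {V : Type*} [DecidableEq V] (K L : Finset (Finset V)) : Prop :=
  ∃ σ ∈ K, ∃ τ ∈ K, τ ⊂ σ ∧ (∀ ρ ∈ K, τ ⊂ ρ → ρ = σ) ∧ L = (K.erase σ).erase τ

/-- `K` collapses simplicially to `L`: a finite sequence of elementary collapses. -/
def SCollapses {V : Type*} [DecidableEq V] (K L : Finset (Finset V)) : Prop :=
  Relation.ReflTransGen ElemSCollapse K L

/-- A finite simplicial complex is collapsible if it collapses to a single vertex. -/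
def SCollapsible {V : Type*} [DecidableEq V] (K : Finset (Finset V)) : Prop :=
  ∃ v : V, SCollapses K {{v}}

open scoped Classical in
/-- The full subcomplex of the order complex of the poset `X` spanned by a subset `A`:
its simplices are the nonempty chains of `X` contained in `A`. -/
def orderComplexIn (X : Type*) [Preorder X] [Fintype X] (A : Set X) : Finset (Finset X) :=
  Finset.univ.filter fun σ => σ.Nonempty ∧ IsChain (· ≤ ·) (σ : Set X) ∧ ↑σ ⊆ A

/-- The order complex of a finite poset: its simplices are the nonempty chains. -/
def orderComplex (X : Type*) [Preorder X] [Fintype X] : Finset (Finset X) :=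
  orderComplexIn X Set.univ


lemma mem_orderComplexIn {X : Type*} [Preorder X] [Fintype X] {A : Set X} {σ : Finset X} :
    σ ∈ orderComplexIn X A ↔ σ.Nonempty ∧ IsChain (· ≤ ·) (σ : Set X) ∧ ↑σ ⊆ A := by
  classical
  simp [orderComplexIn]

lemma mem_orderComplex {X : Type*} [Preorder X] [Fintype X] {σ : Finset X} :
    σ ∈ orderComplex X ↔ σ.Nonempty ∧ IsChain (· ≤ ·) (σ : Set X) := by
  simp [orderComplex, mem_orderComplexIn]

lemma collapse_aux {X : Type} [PartialOrder X] [Fintype X] [DecidableEq X]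
    (x m : X) (hmx : m ≠ x)
    (hcomp : ∀ y : X, (y ≤ x ∨ x ≤ y) → (y ≤ m ∨ m ≤ y)) :
    SCollapses (orderComplex X) (orderComplexIn X {x}ᶜ) := by
  classical
  set K := orderComplex X with hK
  have chain_comp : ∀ {σ : Finset X}, σ ∈ K → x ∈ σ → ∀ y ∈ σ, y ≤ m ∨ m ≤ y := by
    intro σ hσ hx y hy
    have hch := (mem_orderComplex.mp hσ).2
    rcases eq_or_ne y x with rfl | hne
    · exact hcomp y (Or.inl le_rfl)
    · exact hcomp y (hch (Finset.mem_coe.mpr hy) (Finset.mem_coe.mpr hx) hne)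
  have insert_mem : ∀ {σ : Finset X}, σ ∈ K → x ∈ σ → insert m σ ∈ K := by
    intro σ hσ hx
    obtain ⟨hne, hch⟩ := mem_orderComplex.mp hσ
    refine mem_orderComplex.mpr ⟨Finset.insert_nonempty _ _, ?_⟩
    rw [Finset.coe_insert]
    exact hch.insert fun b hb _ => (chain_comp hσ hx b (Finset.mem_coe.mp hb)).symm
  set C : ℕ → Finset (Finset X) :=
    fun k => K.filter (fun ρ => x ∉ ρ ∨ (ρ \ {m}).card ≤ k) with hC
  have memC : ∀ {k ρ}, ρ ∈ C k ↔ ρ ∈ K ∧ (x ∉ ρ ∨ (ρ \ {m}).card ≤ k) := by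
    intro k ρ; rw [hC]; exact Finset.mem_filter
  -- the elementary collapse steps
  have step : ∀ k : ℕ, SCollapses (C (k + 1)) (C k) := by
    intro k
    set T : Finset (Finset X) :=
      K.filter (fun σ => x ∈ σ ∧ m ∉ σ ∧ σ.card = k + 1) with hT
    have memT : ∀ {σ}, σ ∈ T ↔ σ ∈ K ∧ x ∈ σ ∧ m ∉ σ ∧ σ.card = k + 1 := by
      intro σ; rw [hT]; exact Finset.mem_filter
    set E : Finset (Finset X) → Finset (Finset X) := fun S =>
      (C (k + 1)).filter (fun ρ => ρ ∉ S ∧ ¬(m ∈ ρ ∧ ρ \ {m} ∈ S)) with hE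
    have memE : ∀ {S ρ}, ρ ∈ E S ↔ ρ ∈ C (k+1) ∧ ρ ∉ S ∧ ¬(m ∈ ρ ∧ ρ \ {m} ∈ S) := by
      intro S ρ; rw [hE]; exact Finset.mem_filter
    have main : ∀ S : Finset (Finset X), S ⊆ T → SCollapses (C (k + 1)) (E S) := by
      intro S
      induction S using Finset.induction_on with
      | empty =>
        intro _
        have hEe : E ∅ = C (k + 1) := by
          ext ρ; rw [memE]; simp
        rw [hEe]
        exact Relation.ReflTransGen.refl
      | @insert σ S hσS ih =>
        intro hsub
        have hσT : σ ∈ T := hsub (Finset.mem_insert_self _ _)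
        have hST : S ⊆ T := (Finset.subset_insert σ S).trans hsub
        obtain ⟨hσK, hxσ, hmσ, hcard⟩ := memT.mp hσT
        have hsd : insert m σ \ {m} = σ := by
          rw [Finset.insert_sdiff_of_mem _ (Finset.mem_singleton_self m),
            Finset.sdiff_eq_self_of_disjoint (Finset.disjoint_singleton_right.mpr hmσ)]
        have hsdσ : σ \ {m} = σ :=
          Finset.sdiff_eq_self_of_disjoint (Finset.disjoint_singleton_right.mpr hmσ)
        have key : ∀ ρ : Finset X, (m ∈ ρ ∧ ρ \ {m} = σ) ↔ ρ = insert m σ := by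
          intro ρ
          constructor
          · rintro ⟨h1, h2⟩
            rw [← h2, ← Finset.erase_eq, Finset.insert_erase h1]
          · rintro rfl
            exact ⟨Finset.mem_insert_self _ _, hsd⟩
        refine (ih hST).tail ?_
        refine ⟨insert m σ, ?_, σ, ?_, Finset.ssubset_insert hmσ, ?_, ?_⟩
        · refine memE.mpr ⟨memC.mpr ⟨insert_mem hσK hxσ, Or.inr ?_⟩, ?_, ?_⟩
          · rw [hsd, hcard]
          · intro hmem
            exact (memT.mp (hST hmem)).2.2.1 (Finset.mem_insert_self _ _)
          · rintro ⟨-, hmem⟩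
            rw [hsd] at hmem
            exact hσS hmem
        · refine memE.mpr ⟨memC.mpr ⟨hσK, Or.inr ?_⟩, hσS, ?_⟩
          · rw [hsdσ, hcard]
          · rintro ⟨hm, -⟩; exact hmσ hm
        · intro ρ hρ hss
          obtain ⟨hρC, hρS, hρpair⟩ := memE.mp hρ
          obtain ⟨hρK, hρcase⟩ := memC.mp hρC
          have hxρ : x ∈ ρ := hss.subset hxσ
          have hle : (ρ \ {m}).card ≤ k + 1 := by
            rcases hρcase with h | h
            · exact absurd hxρ h
            · exact h
          by_cases hmρ : m ∈ ρ
          · have hsub2 : σ ⊆ ρ \ {m} :=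
              Finset.subset_sdiff.mpr ⟨hss.subset, Finset.disjoint_singleton_right.mpr hmσ⟩
            have heq : σ = ρ \ {m} :=
              Finset.eq_of_subset_of_card_le hsub2 (by rw [hcard]; exact hle)
            exact ((key ρ).mp ⟨hmρ, heq.symm⟩)
          · exfalso
            have : ρ \ {m} = ρ :=
              Finset.sdiff_eq_self_of_disjoint (Finset.disjoint_singleton_right.mpr hmρ)
            rw [this] at hle
            have := Finset.card_lt_card hss
            omega
        · ext ρ
          have hkey := key ρ
          rw [memE, Finset.mem_erase, Finset.mem_erase, memE]
          simp only [Finset.mem_insert]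
          constructor
          · rintro ⟨hC1, hnotin, hpair⟩
            refine ⟨?_, ?_, hC1, ?_, ?_⟩
            · intro h; exact hnotin (Or.inl h)
            · intro h
              exact hpair ⟨(hkey.mpr h).1, Or.inl (hkey.mpr h).2⟩
            · intro h; exact hnotin (Or.inr h)
            · rintro ⟨h1, h2⟩; exact hpair ⟨h1, Or.inr h2⟩
          · rintro ⟨hne1, hne2, hC1, hnS, hnpair⟩
            refine ⟨hC1, ?_, ?_⟩
            · rintro (h | h)
              · exact hne1 h
              · exact hnS h
            · rintro ⟨h1, h2 | h2⟩
              · exact hne2 (hkey.mp ⟨h1, h2⟩)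
              · exact hnpair ⟨h1, h2⟩
    have ET : E T = C k := by
      ext ρ
      rw [memE, memC, memC]
      constructor
      · rintro ⟨⟨hρK, hcase⟩, hnT, hnpair⟩
        refine ⟨hρK, ?_⟩
        by_cases hx : x ∈ ρ
        · right
          have hle : (ρ \ {m}).card ≤ k + 1 := by
            rcases hcase with h | h
            · exact absurd hx h
            · exact h
          by_cases hm : m ∈ ρ
          · have hxm' : x ∈ ρ \ {m} := by
              rw [Finset.mem_sdiff, Finset.mem_singleton]
              exact ⟨hx, fun h => hmx (h ▸ rfl)⟩
            have hρmK : ρ \ {m} ∈ K := by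
              obtain ⟨-, hch⟩ := mem_orderComplex.mp hρK
              refine mem_orderComplex.mpr ⟨⟨x, hxm'⟩, ?_⟩
              exact hch.mono (by rw [Finset.coe_sdiff]; exact Set.diff_subset)
            have hne : (ρ \ {m}).card ≠ k + 1 := by
              intro hcard
              exact hnpair ⟨hm, memT.mpr ⟨hρmK, hxm', by simp, hcard⟩⟩
            omega
          · have hsd : ρ \ {m} = ρ :=
              Finset.sdiff_eq_self_of_disjoint (Finset.disjoint_singleton_right.mpr hm)
            have hne : (ρ \ {m}).card ≠ k + 1 := by
              intro hcard
              exact hnT (memT.mpr ⟨hρK, hx, hm, by rwa [← hsd]⟩)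
            omega
        · exact Or.inl hx
      · rintro ⟨hρK, hcase⟩
        refine ⟨⟨hρK, hcase.imp id (fun h => h.trans (Nat.le_succ k))⟩, ?_, ?_⟩
        · rw [memT]
          rintro ⟨-, hx, hm, hcard⟩
          rcases hcase with h | h
          · exact h hx
          · rw [Finset.sdiff_eq_self_of_disjoint (Finset.disjoint_singleton_right.mpr hm)]
              at h
            omega
        · rintro ⟨hm, hmem⟩
          obtain ⟨-, hx2, -, hcard2⟩ := memT.mp hmem
          rcases hcase with h | h
          · exact h ((Finset.mem_sdiff.mp hx2).1)
          · omega
    rw [← ET]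
    exact main T subset_rfl
  have all : ∀ n : ℕ, SCollapses (C n) (C 0) := by
    intro n
    induction n with
    | zero => exact Relation.ReflTransGen.refl
    | succ k ih => exact Relation.ReflTransGen.trans (step k) ih
  have hCtop : C (Fintype.card X) = K := by
    rw [hC]
    apply Finset.filter_true_of_mem
    intro ρ _
    exact Or.inr ((Finset.card_le_card (Finset.sdiff_subset)).trans (Finset.card_le_univ ρ))
  have hC0 : C 0 = orderComplexIn X {x}ᶜ := by
    ext ρ
    rw [memC, mem_orderComplexIn]
    constructor
    · rintro ⟨hρK, h⟩
      obtain ⟨hne, hch⟩ := mem_orderComplex.mp hρK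
      refine ⟨hne, hch, ?_⟩
      intro a ha
      simp only [Set.mem_compl_iff, Set.mem_singleton_iff]
      rintro rfl
      rcases h with h | h
      · exact h (Finset.mem_coe.mp ha)
      · have he : ρ \ {m} = ∅ := Finset.card_eq_zero.mp (Nat.le_zero.mp h)
        have hsub : ρ ⊆ {m} := by rwa [Finset.sdiff_eq_empty_iff_subset] at he
        have : a = m := Finset.mem_singleton.mp (hsub (Finset.mem_coe.mp ha))
        exact hmx this.symm
    · rintro ⟨hne, hch, hsub⟩
      refine ⟨mem_orderComplex.mpr ⟨hne, hch⟩, Or.inl fun hx => ?_⟩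
      exact (hsub (Finset.mem_coe.mpr hx)) rfl
  show SCollapses K (orderComplexIn X {x}ᶜ)
  rw [← hCtop, ← hC0]
  exact all _

lemma part1 {X : Type} [PartialOrder X] [Fintype X] [DecidableEq X] (x : X)
    (hb : IsBeatPoint x) : SCollapses (orderComplex X) (orderComplexIn X {x}ᶜ) := by
  rcases hb with ⟨m, hmx, hmax⟩ | ⟨m, hxm, hmin⟩
  · refine collapse_aux x m (ne_of_lt hmx) (fun y hy => ?_)
    rcases hy with hy | hy
    · rcases eq_or_lt_of_le hy with rfl | hy'
      · exact Or.inr hmx.le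
      · exact Or.inl (hmax y hy')
    · exact Or.inr (hmx.le.trans hy)
  · refine collapse_aux x m (ne_of_gt hxm) (fun y hy => ?_)
    rcases hy with hy | hy
    · exact Or.inl (hy.trans hxm.le)
    · rcases eq_or_lt_of_le hy with rfl | hy'
      · exact Or.inl hxm.le
      · exact Or.inr (hmin y hy')

-- Part 2: contractibility ⇒ collapsibility

def OCrel {X : Type*} [Preorder X] (f g : X → X) : Prop :=
  Monotone f ∧ Monotone g ∧ (f ≤ g ∨ g ≤ f)

def OC (X : Type*) [Preorder X] : Prop :=
  ∃ c : X, Relation.ReflTransGen OCrel id (Function.const X c)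

lemma eq_id_of_le_id_s3 {X : Type*} [PartialOrder X] [Finite X]
    (hnb : ∀ z : X, ¬ IsBeatPoint z) {f : X → X} (hf : Monotone f) (hle : f ≤ id) :
    f = id := by
  have key : ∀ a : X, f a = a := by
    intro a
    induction a using WellFoundedLT.induction with
    | _ a ih =>
      by_contra hne
      have hlt : f a < a := lt_of_le_of_ne (hle a) hne
      exact hnb a (Or.inl ⟨f a, hlt, fun y hy => (ih y hy) ▸ hf hy.le⟩)
  funext a
  exact key a

lemma eq_id_of_id_le_s3 {X : Type*} [PartialOrder X] [Finite X]
    (hnb : ∀ z : X, ¬ IsBeatPoint z) {f : X → X} (hf : Monotone f) (hle : id ≤ f) :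
    f = id := by
  have key : ∀ a : X, f a = a := by
    intro a
    induction a using WellFoundedGT.induction with
    | _ a ih =>
      by_contra hne
      have hlt : a < f a := lt_of_le_of_ne (hle a) (Ne.symm hne)
      exact hnb a (Or.inr ⟨f a, hlt, fun y hy => (ih y hy) ▸ hf hy.le⟩)
  funext a
  exact key a

lemma eq_of_oc_no_beat {X : Type*} [PartialOrder X] [Finite X]
    (hnb : ∀ z : X, ¬ IsBeatPoint z) (h : OC X) : ∀ a b : X, a = b := by
  obtain ⟨c, hc⟩ := h
  have key : ∀ gf : X → X, Relation.ReflTransGen OCrel id gf → gf = id := by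
    intro gf hgf
    induction hgf with
    | refl => rfl
    | tail _ hbc ih =>
      rw [ih] at hbc
      obtain ⟨-, hcm, hle | hle⟩ := hbc
      · exact eq_id_of_id_le_s3 hnb hcm hle
      · exact eq_id_of_le_id_s3 hnb hcm hle
  have hcid : Function.const X c = id := key _ hc
  intro a b
  exact (congrFun hcid a).symm.trans (congrFun hcid b)

lemma oc_restrict {X : Type*} [Preorder X] {A : Set X} (r : X → A) (hr : Monotone r)
    (hfix : ∀ a : A, r ↑a = a) (h : OC X) : OC A := by
  obtain ⟨c, hc⟩ := h
  refine ⟨r c, ?_⟩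
  have hl := Relation.ReflTransGen.lift (r := OCrel) (p := OCrel)
      (fun f : X → X => fun a : A => r (f ↑a)) ?_ _ _ hc
  · have h1 : (fun a : A => r (id ↑a)) = id := funext fun a => hfix a
    have h2 : (fun a : A => r (Function.const X c ↑a)) = Function.const A (r c) := rfl
    have hl' : Relation.ReflTransGen OCrel (fun a : A => r (id ↑a))
        (fun a : A => r (Function.const X c ↑a)) := hl
    rwa [h1, h2] at hl'
  · rintro f g ⟨hf, hg, hle⟩
    refine ⟨?_, ?_, ?_⟩
    · intro a b hab; exact hr (hf (Subtype.coe_le_coe.mpr hab))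
    · intro a b hab; exact hr (hg (Subtype.coe_le_coe.mpr hab))
    · rcases hle with hle | hle
      · exact Or.inl fun a => hr (hle _)
      · exact Or.inr fun a => hr (hle _)

lemma oc_compl_of_beat {X : Type*} [PartialOrder X] {x : X} (hb : IsBeatPoint x) (h : OC X) :
    OC ({x}ᶜ : Set X) := by
  classical
  rcases hb with ⟨m, hmx, hmax⟩ | ⟨m, hxm, hmin⟩
  · refine oc_restrict
      (fun y => if hy : y = x then ⟨m, by simp [hmx.ne]⟩ else ⟨y, by simp [hy]⟩) ?_ ?_ h
    · intro a b hab
      by_cases ha : a = x <;> by_cases hbb : b = x <;>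
        simp only [dif_pos, dif_neg, ha, hbb]
      · exact le_rfl
      · exact Subtype.mk_le_mk.mpr (hmx.le.trans (ha ▸ hab))
      · exact Subtype.mk_le_mk.mpr (hmax a (lt_of_le_of_ne (hbb ▸ hab) ha))
      · exact Subtype.mk_le_mk.mpr hab
    · intro a
      have ha : (a : X) ≠ x := a.2
      simp only [dif_neg ha]
  · refine oc_restrict
      (fun y => if hy : y = x then ⟨m, by simp [hxm.ne']⟩ else ⟨y, by simp [hy]⟩) ?_ ?_ h
    · intro a b hab
      by_cases ha : a = x <;> by_cases hbb : b = x <;>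
        simp only [dif_pos, dif_neg, ha, hbb]
      · exact le_rfl
      · exact Subtype.mk_le_mk.mpr (hmin b (lt_of_le_of_ne (ha ▸ hab) (Ne.symm hbb)))
      · exact Subtype.mk_le_mk.mpr ((hbb ▸ hab).trans hxm.le)
      · exact Subtype.mk_le_mk.mpr hab
    · intro a
      have ha : (a : X) ≠ x := a.2
      simp only [dif_neg ha]

lemma oc_of_contractible {X : Type} [PartialOrder X] [Fintype X]
    (h : @ContractibleSpace X (downTop X)) : OC X := by
  letI : TopologicalSpace X := downTop X
  haveI : Topology.IsLowerSet X := ⟨rfl⟩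
  haveI := h
  obtain ⟨x₀, ⟨H⟩⟩ := id_nullhomotopic X
  set g : unitInterval → X → X := fun t y => H (t, y) with hg
  have hgmono : ∀ t, Monotone (g t) := by
    intro t
    rw [Topology.IsLowerSet.monotone_iff_continuous]
    exact H.continuous.comp (Continuous.prodMk_right t)
  set CC : Set (X → X) := {f | Monotone f ∧ Relation.ReflTransGen OCrel id f} with hCC
  have hopen : ∀ f : X → X, IsOpen {t : unitInterval | ∀ y, g t y ≤ f y} := by
    intro f
    have heq : {t : unitInterval | ∀ y, g t y ≤ f y}
        = ⋂ y, (fun t : unitInterval => g t y) ⁻¹' (Set.Iic (f y)) := by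
      ext t; simp [Set.mem_iInter]
    rw [heq]
    refine isOpen_iInter_of_finite fun y => IsOpen.preimage ?_ ?_
    · exact H.continuous.comp (Continuous.prodMk_left y)
    · exact (Topology.IsLowerSet.isOpen_iff_isLowerSet).mpr (isLowerSet_Iic _)
  set S : Set unitInterval := {t | g t ∈ CC} with hS
  have hSopen : IsOpen S := by
    have heq : S = ⋃ (f : X → X) (_ : f ∈ CC), {t | ∀ y, g t y ≤ f y} := by
      ext t
      simp only [hS, Set.mem_setOf_eq, Set.mem_iUnion]
      constructor
      · intro ht; exact ⟨g t, ht, fun y => le_rfl⟩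
      · rintro ⟨f, hf, hle⟩
        exact ⟨hgmono t, hf.2.tail ⟨hf.1, hgmono t, Or.inr hle⟩⟩
    rw [heq]
    exact isOpen_iUnion fun f => isOpen_iUnion fun _ => hopen f
  have hScopen : IsOpen Sᶜ := by
    have heq : Sᶜ = ⋃ (f : X → X) (_ : Monotone f ∧ f ∉ CC), {t | ∀ y, g t y ≤ f y} := by
      ext t
      simp only [hS, Set.mem_compl_iff, Set.mem_setOf_eq, Set.mem_iUnion]
      constructor
      · intro ht; exact ⟨g t, ⟨hgmono t, ht⟩, fun y => le_rfl⟩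
      · rintro ⟨f, ⟨hfm, hfn⟩, hle⟩ hgt
        exact hfn ⟨hfm, hgt.2.tail ⟨hgt.1, hfm, Or.inl hle⟩⟩
    rw [heq]
    exact isOpen_iUnion fun f => isOpen_iUnion fun _ => hopen f
  have h0 : (0 : unitInterval) ∈ S := by
    have hid : g 0 = id := funext fun y => H.apply_zero y
    exact ⟨hid ▸ monotone_id, hid ▸ Relation.ReflTransGen.refl⟩
  have hall : S = Set.univ := IsClopen.eq_univ ⟨isOpen_compl_iff.mp hScopen, hSopen⟩ ⟨0, h0⟩
  have h1 : (1 : unitInterval) ∈ S := hall ▸ Set.mem_univ _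
  obtain ⟨-, hfence⟩ := h1
  have hone : g 1 = Function.const X x₀ := funext fun y => H.apply_one y
  exact ⟨x₀, hone ▸ hfence⟩

lemma elem_map {V W : Type*} [DecidableEq V] [DecidableEq W] (f : V ↪ W)
    {K L : Finset (Finset V)} (h : ElemSCollapse K L) :
    ElemSCollapse (K.image (Finset.map f)) (L.image (Finset.map f)) := by
  obtain ⟨σ, hσ, τ, hτ, hss, huniq, hL⟩ := h
  refine ⟨σ.map f, Finset.mem_image_of_mem _ hσ, τ.map f, Finset.mem_image_of_mem _ hτ,
    Finset.map_ssubset_map.mpr hss, ?_, ?_⟩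
  · rintro ρ' hρ' hss'
    obtain ⟨ρ, hρ, rfl⟩ := Finset.mem_image.mp hρ'
    rw [huniq ρ hρ (Finset.map_ssubset_map.mp hss')]
  · rw [hL, Finset.image_erase (Finset.map_injective f), Finset.image_erase (Finset.map_injective f)]

lemma sCollapses_map {V W : Type*} [DecidableEq V] [DecidableEq W] (f : V ↪ W)
    {K L : Finset (Finset V)} (h : SCollapses K L) :
    SCollapses (K.image (Finset.map f)) (L.image (Finset.map f)) :=
  Relation.ReflTransGen.lift (Finset.image (Finset.map f)) (fun _ _ hab => elem_map f hab) _ _ h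

lemma orderComplexIn_eq_map {X : Type} [PartialOrder X] [Fintype X] [DecidableEq X]
    (A : Set X) [Fintype A] [DecidablePred (· ∈ A)] :
    orderComplexIn X A =
      (orderComplex A).image (Finset.map (Function.Embedding.subtype (· ∈ A))) := by
  classical
  ext σ
  rw [mem_orderComplexIn, Finset.mem_image]
  constructor
  · rintro ⟨hne, hch, hsub⟩
    refine ⟨σ.subtype (· ∈ A), mem_orderComplex.mpr ⟨?_, ?_⟩, ?_⟩
    · obtain ⟨a, ha⟩ := hne
      exact ⟨⟨a, hsub ha⟩, Finset.mem_subtype.mpr ha⟩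
    · intro a ha b hb hab
      have ha' : (a : X) ∈ σ := Finset.mem_subtype.mp (Finset.mem_coe.mp ha)
      have hb' : (b : X) ∈ σ := Finset.mem_subtype.mp (Finset.mem_coe.mp hb)
      have := hch (Finset.mem_coe.mpr ha') (Finset.mem_coe.mpr hb')
        (fun e => hab (Subtype.ext e))
      exact this.imp Subtype.coe_le_coe.mp Subtype.coe_le_coe.mp
    · rw [Finset.subtype_map]
      exact Finset.filter_true_of_mem fun a ha => hsub ha
  · rintro ⟨τ, hτ, rfl⟩
    obtain ⟨hne, hch⟩ := mem_orderComplex.mp hτ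
    refine ⟨Finset.Nonempty.map hne, ?_, ?_⟩
    · intro a ha b hb hab
      obtain ⟨a', ha', rfl⟩ := Finset.mem_map.mp (Finset.mem_coe.mp ha)
      obtain ⟨b', hb', rfl⟩ := Finset.mem_map.mp (Finset.mem_coe.mp hb)
      have hne' : a' ≠ b' := fun e => hab (by rw [e])
      have := hch (Finset.mem_coe.mpr ha') (Finset.mem_coe.mpr hb') hne'
      exact this.imp Subtype.coe_le_coe.mpr Subtype.coe_le_coe.mpr
    · intro a ha
      obtain ⟨a', _, rfl⟩ := Finset.mem_map.mp (Finset.mem_coe.mp ha)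
      exact a'.2

lemma oc_collapsible : ∀ n : ℕ, ∀ (X : Type) [PartialOrder X] [Fintype X] [DecidableEq X],
    Fintype.card X ≤ n → OC X → SCollapsible (orderComplex X) := by
  intro n
  induction n with
  | zero =>
    intro X _ _ _ hcard hoc
    obtain ⟨c, -⟩ := hoc
    have : 0 < Fintype.card X := Fintype.card_pos_iff.mpr ⟨c⟩
    omega
  | succ n ih =>
    intro X _ _ _ hcard hoc
    classical
    by_cases hbeat : ∃ x : X, IsBeatPoint x
    · obtain ⟨x, hx⟩ := hbeat
      haveI : Fintype ({x}ᶜ : Set X) := Fintype.ofFinite _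
      have hlt : Fintype.card ({x}ᶜ : Set X) < Fintype.card X := by
        refine Fintype.card_lt_of_injective_of_notMem
          (Subtype.val : ({x}ᶜ : Set X) → X) Subtype.val_injective (b := x) ?_
        rintro ⟨a, ha⟩
        exact a.2 ha
      obtain ⟨v, hv⟩ := ih ({x}ᶜ : Set X) (by omega) (oc_compl_of_beat hx hoc)
      refine ⟨↑v, (part1 x hx).trans ?_⟩
      have hmap := sCollapses_map (Function.Embedding.subtype (· ∈ ({x}ᶜ : Set X))) hv
      rw [← orderComplexIn_eq_map] at hmap
      simp only [Finset.image_singleton, Finset.map_singleton,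
        Function.Embedding.coe_subtype] at hmap
      exact hmap
    · push_neg at hbeat
      have hsub := eq_of_oc_no_beat hbeat hoc
      obtain ⟨c, -⟩ := hoc
      refine ⟨c, ?_⟩
      have hsing : orderComplex X = {{c}} := by
        ext σ
        rw [mem_orderComplex, Finset.mem_singleton]
        constructor
        · rintro ⟨⟨a, ha⟩, -⟩
          refine Finset.eq_singleton_iff_unique_mem.mpr ⟨?_, fun b _ => hsub b c⟩
          rwa [hsub a c] at ha
        · rintro rfl
          refine ⟨⟨c, Finset.mem_singleton_self c⟩, ?_⟩
          rw [Finset.coe_singleton]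
          rintro p hp q hq hne
          exact absurd ((Set.mem_singleton_iff.mp hp).trans
            (Set.mem_singleton_iff.mp hq).symm) hne
      rw [hsing]
      exact Relation.ReflTransGen.refl

theorem orderComplex_collapses_of_beat_point (X : Type) [PartialOrder X] [Fintype X]
    [DecidableEq X] :
    (∀ x : X, IsBeatPoint x → SCollapses (orderComplex X) (orderComplexIn X {x}ᶜ)) ∧
      (@ContractibleSpace X (downTop X) → SCollapsible (orderComplex X)) := by
  refine ⟨fun x hx => part1 x hx, fun h => ?_⟩
  exact oc_collapsible (Fintype.card X) X le_rfl (oc_of_contractible h)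
end
end

section
/- Let X be a finite T₀-space and Y ⊆ X. If X collapses to Y as finite spaces (i.e., Y is obtained from X by successively removing weak points), then the order complex K(X) simplicially collapses to K(Y). -/
/-!
STATEMENT 4: Let X be a finite T₀-space and Y ⊆ X. If X collapses to Y as finite spaces
(Y is obtained from X by successively removing weak points), then the order complex K(X)
simplicially collapses to K(Y).

A finite T₀-space is identified with a finite poset with the down-set topology.  Subspaces
of X are encoded as subsets A ⊆ X carrying the subspace topology; x is a weak point of A
if {y ∈ A | y < x} or {y ∈ A | y > x} is contractible.
-/

noncomputable section

/-- A subset of a poset is contractible when, with the subspace topology coming from the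
down-set topology, it is homotopy equivalent to a point. -/
def SubContractible {X : Type*} [Preorder X] (A : Set X) : Prop :=
  @ContractibleSpace A (TopologicalSpace.induced Subtype.val (downTop X))

/-- `x` is a weak point of the subspace `A`: the set of points of `A` strictly below `x`
or the set of points of `A` strictly above `x` is contractible. -/
def IsWeakPointIn {X : Type*} [PartialOrder X] (A : Set X) (x : X) : Prop :=
  x ∈ A ∧ (SubContractible {y | y ∈ A ∧ y < x} ∨ SubContractible {y | y ∈ A ∧ x < y})

/-- Elementary collapse of finite spaces: removal of a single weak point. -/
def ElemSpaceCollapse {X : Type*} [PartialOrder X] (A B : Set X) : Prop :=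
  ∃ x, IsWeakPointIn A x ∧ B = A \ {x}

/-- The finite space `A` collapses to `B`: a finite sequence of elementary collapses. -/
def SpaceCollapses {X : Type*} [PartialOrder X] (A B : Set X) : Prop :=
  Relation.ReflTransGen ElemSpaceCollapse A B

set_option maxHeartbeats 1600000

section Top
open Topology
variable {X : Type*} [PartialOrder X]

/-- the subspace topology used throughout -/
abbrev subTop (A : Set X) : TopologicalSpace ↥A :=
  TopologicalSpace.induced Subtype.val (downTop X)

lemma induced_downTop_eq (A : Set X) : subTop A = Topology.lowerSet A := by
  apply TopologicalSpace.ext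
  ext S
  show (∃ L, IsLowerSet L ∧ Subtype.val ⁻¹' L = S) ↔ IsLowerSet S
  constructor
  · rintro ⟨L, hL, rfl⟩
    intro a b hab ha
    exact hL hab ha
  · intro hS
    refine ⟨{x | ∃ a : A, a ∈ S ∧ x ≤ (a : X)}, ?_, ?_⟩
    · rintro b a hba ⟨c, hc, hac⟩
      exact ⟨c, hc, hba.trans hac⟩
    · ext a
      constructor
      · rintro ⟨c, hc, hac⟩
        exact hS (show a ≤ c from hac) hc
      · intro ha; exact ⟨a, ha, le_rfl⟩

lemma isOpen_subTop_iff {A : Set X} (S : Set ↥A) :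
    IsOpen[subTop A] S ↔ IsLowerSet S := by
  rw [induced_downTop_eq]; exact Iff.rfl

lemma continuous_iff_monotone_sub {A B : Set X} (f : ↥A → ↥B) :
    Continuous[subTop A, subTop B] f ↔ Monotone f := by
  rw [induced_downTop_eq, induced_downTop_eq]
  letI : TopologicalSpace ↥A := Topology.lowerSet ↥A
  letI : TopologicalSpace ↥B := Topology.lowerSet ↥B
  exact Topology.IsLowerSet.monotone_iff_continuous.symm
end Top

section Top2
open Topology unitInterval
variable {X : Type*} [PartialOrder X] {A : Set X}

lemma homotopic_of_le_s4
    (f g : @ContinuousMap ↥A ↥A (subTop A) (subTop A)) (hfg : ∀ a, f a ≤ g a) :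
    @ContinuousMap.Homotopic _ _ (subTop A) (subTop A) f g := by
  letI : TopologicalSpace ↥A := subTop A
  refine ⟨⟨⟨fun p => if p.1 = 1 then g p.2 else f p.2, ?_⟩, ?_, ?_⟩⟩
  · rw [continuous_def]
    intro U hU
    have hUl : IsLowerSet U := (isOpen_subTop_iff U).1 hU
    have hsub : g ⁻¹' U ⊆ f ⁻¹' U := fun a ha => hUl (hfg a) ha
    have : (fun p : I × ↥A => if p.1 = 1 then g p.2 else f p.2) ⁻¹' U =
        ({1}ᶜ ×ˢ (f ⁻¹' U)) ∪ (Set.univ ×ˢ (g ⁻¹' U)) := by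
      ext ⟨t, a⟩
      by_cases ht : t = 1 <;> simp [ht]
      · intro h; exact hsub h
    rw [this]
    exact ((isOpen_compl_singleton).prod (f.continuous.isOpen_preimage U hU)).union
      (isOpen_univ.prod (g.continuous.isOpen_preimage U hU))
  · intro a; simp [(zero_ne_one (α := I))]
  · intro a; simp

/-- the comparability relation on monotone self-maps -/
def MonoComp {A : Set X} (f g : ↥A → ↥A) : Prop :=
  Monotone f ∧ Monotone g ∧ (f ≤ g ∨ g ≤ f)

lemma exists_fence [Finite ↥A] (hA : SubContractible A) :
    ∃ c : ↥A, Relation.ReflTransGen MonoComp id (Function.const ↥A c) := by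
  classical
  letI : TopologicalSpace ↥A := subTop A
  haveI : ContractibleSpace ↥A := hA
  obtain ⟨c, ⟨H⟩⟩ := id_nullhomotopic ↥A
  set f : I → ↥A → ↥A := fun t a => H (t, a) with hf
  have hcont : ∀ t, Continuous (f t) := fun t =>
    H.continuous.comp (Continuous.prodMk_right t)
  have hmono : ∀ t, Monotone (f t) := fun t =>
    (continuous_iff_monotone_sub (f t)).1 (hcont t)
  -- neighbourhood lemma
  have key : ∀ t : I, {s : I | ∀ a, f s a ≤ f t a} ∈ nhds t := by
    intro t
    have h1 : ∀ a : ↥A, {s : I | f s a ≤ f t a} ∈ nhds t := by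
      intro a
      have hO : IsOpen {b : ↥A | b ≤ f t a} :=
        (isOpen_subTop_iff _).2 (fun u v huv hu => le_trans huv hu)
      have hpre : IsOpen (H ⁻¹' {b : ↥A | b ≤ f t a}) :=
        H.continuous.isOpen_preimage _ hO
      have hmem : (t, a) ∈ H ⁻¹' {b : ↥A | b ≤ f t a} := le_rfl
      rcases (isOpen_prod_iff.1 hpre) t a hmem with ⟨u, v, hu, hv, htu, hav, huv⟩
      refine Filter.mem_of_superset (hu.mem_nhds htu) ?_
      intro s hs
      exact huv (Set.mk_mem_prod hs hav)
    have := (Filter.iInter_mem (f := nhds t) (s := fun a : ↥A => {s : I | f s a ≤ f t a})).2 h1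
    refine Filter.mem_of_superset this ?_
    intro s hs a
    exact Set.mem_iInter.1 hs a
  set S : Set I := {t | Relation.ReflTransGen MonoComp id (f t)} with hS
  have hopen : IsOpen S := by
    rw [isOpen_iff_mem_nhds]
    intro t ht
    refine Filter.mem_of_superset (key t) ?_
    intro s hs
    exact Relation.ReflTransGen.tail ht ⟨hmono t, hmono s, Or.inr hs⟩
  have hclosed : IsClosed S := by
    rw [← isOpen_compl_iff, isOpen_iff_mem_nhds]
    intro t ht
    refine Filter.mem_of_superset (key t) ?_
    intro s hs hsS
    exact ht (Relation.ReflTransGen.tail hsS ⟨hmono s, hmono t, Or.inl hs⟩)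
  have h0 : (0 : I) ∈ S := by
    have : f 0 = id := funext fun a => H.apply_zero a
    rw [Set.mem_setOf_eq, this]
  have : S = Set.univ := (IsClopen.eq_univ ⟨hclosed, hopen⟩ ⟨0, h0⟩)
  have h1S : (1 : I) ∈ S := this ▸ Set.mem_univ _
  refine ⟨c, ?_⟩
  have : f 1 = Function.const ↥A c := funext fun a => H.apply_one a
  rwa [Set.mem_setOf_eq, this] at h1S
end Top2

section Top3
open Topology
variable {X : Type*} [PartialOrder X] {A : Set X}

/-- `x` is a beat point of `A`. -/
def IsBeatIn (A : Set X) (x : X) : Prop :=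
  x ∈ A ∧ ((∃ y, (y ∈ A ∧ y < x) ∧ ∀ z, z ∈ A → z < x → z ≤ y) ∨
           (∃ y, (y ∈ A ∧ x < y) ∧ ∀ z, z ∈ A → x < z → y ≤ z))

lemma eq_id_of_comp [Finite ↥A] (hnb : ∀ x, ¬ IsBeatIn A x)
    {f : ↥A → ↥A} (hf : Monotone f) (hcmp : f ≤ id ∨ id ≤ f) : f = id := by
  by_contra hne
  rcases hcmp with hle | hge
  · have hs : {a : ↥A | f a ≠ a}.Nonempty := by
      by_contra h
      exact hne (funext fun a => by
        by_contra h'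
        exact h ⟨a, h'⟩)
    obtain ⟨a, ha, hamin'⟩ := Set.Finite.exists_minimalFor id _ (Set.toFinite _) hs
    have hamin : ∀ b ∈ {a : ↥A | f a ≠ a}, b ≤ a → a = b := fun b hb hba =>
      le_antisymm (hamin' hb hba) hba
    have hfa : f a < a := lt_of_le_of_ne (hle a) ha
    refine hnb a ⟨a.2, Or.inl ⟨(f a : X), ⟨(f a).2, hfa⟩, ?_⟩⟩
    intro z hz hza
    have hb : (⟨z, hz⟩ : ↥A) < a := hza
    have hbfix : f ⟨z, hz⟩ = ⟨z, hz⟩ := by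
      by_contra h'
      exact absurd (hamin _ h' hb.le) hb.ne'
    calc z = ((f ⟨z, hz⟩ : ↥A) : X) := by rw [hbfix]
    _ ≤ (f a : X) := hf hb.le
  · have hs : {a : ↥A | f a ≠ a}.Nonempty := by
      by_contra h
      exact hne (funext fun a => by
        by_contra h'
        exact h ⟨a, h'⟩)
    obtain ⟨a, ha, hamax'⟩ := Set.Finite.exists_maximalFor id _ (Set.toFinite _) hs
    have hamax : ∀ b ∈ {a : ↥A | f a ≠ a}, a ≤ b → a = b := fun b hb hab =>
      le_antisymm hab (hamax' hb hab)
    have hfa : a < f a := lt_of_le_of_ne (hge a) (Ne.symm ha)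
    refine hnb a ⟨a.2, Or.inr ⟨(f a : X), ⟨(f a).2, hfa⟩, ?_⟩⟩
    intro z hz hza
    have hb : a < (⟨z, hz⟩ : ↥A) := hza
    have hbfix : f ⟨z, hz⟩ = ⟨z, hz⟩ := by
      by_contra h'
      exact absurd (hamax _ h' hb.le) hb.ne
    calc (f a : X) ≤ ((f ⟨z, hz⟩ : ↥A) : X) := hf hb.le
    _ = z := by rw [hbfix]

lemma singleton_of_contractible_no_beat [Finite ↥A] (hA : SubContractible A)
    (hnb : ∀ x, ¬ IsBeatIn A x) : ∃ p, A = {p} := by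
  obtain ⟨c, hfence⟩ := exists_fence hA
  have : ∀ g : ↥A → ↥A, Relation.ReflTransGen MonoComp id g → g = id := by
    intro g hg
    induction hg with
    | refl => rfl
    | tail _ hstep ih =>
      subst ih
      obtain ⟨h1, h2, h3⟩ := hstep
      exact (eq_id_of_comp hnb h2 (h3.symm.imp (fun h => h) (fun h => h))).symm ▸ rfl
  have hconst := this _ hfence
  refine ⟨(c : X), ?_⟩
  ext a
  constructor
  · intro ha
    have : Function.const ↥A c ⟨a, ha⟩ = id ⟨a, ha⟩ := by rw [hconst]
    simpa using congrArg Subtype.val this.symm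
  · rintro rfl; exact c.2
end Top3

section Top4
open Topology
variable {X : Type*} [PartialOrder X] {A : Set X}

lemma subContractible_diff {x : X} (hb : IsBeatIn A x) (hA : SubContractible A) :
    SubContractible (A \ {x}) := by
  classical
  obtain ⟨hxA, hbeat⟩ := hb
  letI tA : TopologicalSpace ↥A := subTop A
  letI tB : TopologicalSpace ↥(A \ {x}) := subTop (A \ {x})
  -- the beat partner
  obtain ⟨y, ⟨⟨hyA, hyx⟩, hmax⟩, hside⟩ :
      ∃ y, ((y ∈ A ∧ (y < x ∨ x < y)) ∧ True) ∧
        ((y < x ∧ ∀ z, z ∈ A → z < x → z ≤ y) ∨ (x < y ∧ ∀ z, z ∈ A → x < z → y ≤ z)) := by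
    rcases hbeat with ⟨y, ⟨hy1, hy2⟩, hy3⟩ | ⟨y, ⟨hy1, hy2⟩, hy3⟩
    · exact ⟨y, ⟨⟨hy1, Or.inl hy2⟩, trivial⟩, Or.inl ⟨hy2, hy3⟩⟩
    · exact ⟨y, ⟨⟨hy1, Or.inr hy2⟩, trivial⟩, Or.inr ⟨hy2, hy3⟩⟩
  have hyne : y ≠ x := by rcases hside with h | h; exacts [h.1.ne, h.1.ne']
  set j : ↥(A \ {x}) → ↥A := fun b => ⟨b.1, b.2.1⟩ with hj
  set r : ↥A → ↥(A \ {x}) := fun a =>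
    if h : (a : X) = x then ⟨y, hyA, hyne⟩ else ⟨a, a.2, h⟩ with hr
  have hjmono : Monotone j := fun a b hab => hab
  have hrmono : Monotone r := by
    intro a b hab
    by_cases ha : (a : X) = x <;> by_cases hbx : (b : X) = x <;>
      simp only [hr, ha, hbx, dif_pos, dif_neg, not_false_iff]
    · exact le_rfl
    · -- a = x, b ≠ x : x ≤ b, x ≠ b so x < b
      rcases hside with ⟨hlt, _⟩ | ⟨hlt, hmin⟩
      · show y ≤ (b : X)
        exact le_trans hlt.le (ha ▸ hab)
      · show y ≤ (b : X)
        exact hmin b b.2 (lt_of_le_of_ne (ha ▸ hab) (fun h => hbx h.symm))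
    · -- a ≠ x, b = x
      rcases hside with ⟨hlt, hmax'⟩ | ⟨hlt, _⟩
      · show (a : X) ≤ y
        exact hmax' a a.2 (lt_of_le_of_ne (hbx ▸ hab) ha)
      · show (a : X) ≤ y
        exact le_trans (hbx ▸ hab) hlt.le
    · exact hab
  have hrj : ∀ b, r (j b) = b := by
    intro b
    simp only [hr, hj]
    rw [dif_neg (show ¬((b : X) = x) from b.2.2)]
  set Cj : @ContinuousMap ↥(A \ {x}) ↥A tB tA :=
    ⟨j, (continuous_iff_monotone_sub j).2 hjmono⟩ with hCj
  set Cr : @ContinuousMap ↥A ↥(A \ {x}) tA tB :=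
    ⟨r, (continuous_iff_monotone_sub r).2 hrmono⟩ with hCr
  have hright : (Cr.comp Cj) = ContinuousMap.id _ := ContinuousMap.ext hrj
  have hleft : (Cj.comp Cr).Homotopic (ContinuousMap.id ↥A) := by
    rcases hside with ⟨hlt, _⟩ | ⟨hlt, _⟩
    · refine homotopic_of_le_s4 (Cj.comp Cr) (ContinuousMap.id ↥A) ?_
      intro a
      by_cases ha : (a : X) = x
      · show ((Cj.comp Cr) a : X) ≤ a
        simp only [ContinuousMap.comp_apply, hCr, hCj, ContinuousMap.coe_mk, hr, dif_pos ha, hj]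
        exact ha ▸ hlt.le
      · show ((Cj.comp Cr) a : X) ≤ a
        simp only [ContinuousMap.comp_apply, hCr, hCj, ContinuousMap.coe_mk, hr, dif_neg ha, hj]
        exact le_rfl
    · refine (homotopic_of_le_s4 (ContinuousMap.id ↥A) (Cj.comp Cr) ?_).symm
      intro a
      by_cases ha : (a : X) = x
      · show (a : X) ≤ ((Cj.comp Cr) a : X)
        simp only [ContinuousMap.comp_apply, hCr, hCj, ContinuousMap.coe_mk, hr, dif_pos ha, hj]
        exact ha ▸ hlt.le
      · show (a : X) ≤ ((Cj.comp Cr) a : X)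
        simp only [ContinuousMap.comp_apply, hCr, hCj, ContinuousMap.coe_mk, hr, dif_neg ha, hj]
        exact le_rfl
  haveI : @ContractibleSpace ↥A tA := hA
  have E : @ContinuousMap.HomotopyEquiv ↥A ↥(A \ {x}) tA tB :=
    ⟨Cr, Cj, hleft, by rw [hright]⟩
  exact E.symm.contractibleSpace
end Top4

section Simp
variable {V : Type*} [DecidableEq V]

lemma ElemSCollapse.subset {K L : Finset (Finset V)} (h : ElemSCollapse K L) : L ⊆ K := by
  obtain ⟨σ, -, τ, -, -, -, rfl⟩ := h
  exact (Finset.erase_subset _ _).trans (Finset.erase_subset _ _)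

lemma SCollapses.subset {K L : Finset (Finset V)} (h : SCollapses K L) : L ⊆ K := by
  induction h with
  | refl => exact Finset.Subset.refl _
  | tail _ hstep ih => exact hstep.subset.trans ih

lemma insert_injective_lemma {x : V} {s t : Finset V} (hs : x ∉ s) (ht : x ∉ t)
    (h : insert x s = insert x t) : s = t := by
  rw [← Finset.erase_insert hs, ← Finset.erase_insert ht, h]

/-- a cone collapses to its apex -/
lemma cone_collapses (y : V) (K : Finset (Finset V))
    (hdc : ∀ σ ∈ K, ∀ τ ⊆ σ, τ.Nonempty → τ ∈ K)
    (hne : ∀ σ ∈ K, σ.Nonempty)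
    (hcone : ∀ σ ∈ K, insert y σ ∈ K)
    (hKne : K.Nonempty) :
    SCollapses K {({y} : Finset V)} := by
  classical
  have hyK : ({y} : Finset V) ∈ K := by
    obtain ⟨ρ, hρ⟩ := hKne
    exact hdc _ (hcone ρ hρ) {y} (Finset.singleton_subset_iff.2 (Finset.mem_insert_self y ρ))
      (Finset.singleton_nonempty y)
  by_cases hK1 : K = {({y} : Finset V)}
  · rw [hK1]
    exact Relation.ReflTransGen.refl
  · -- find a maximal-card simplex not containing y
    have hT : (K.filter fun σ => y ∉ σ).Nonempty := by
      obtain ⟨ρ, hρ, hρne⟩ : ∃ ρ ∈ K, ρ ≠ {y} := by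
        by_contra h
        push_neg at h
        exact hK1 (Finset.eq_singleton_iff_unique_mem.2 ⟨hyK, h⟩)
      by_cases hy : y ∈ ρ
      · refine ⟨ρ.erase y, Finset.mem_filter.2 ⟨?_, Finset.notMem_erase y ρ⟩⟩
        refine hdc _ hρ _ (Finset.erase_subset _ _) ?_
        rw [← Finset.card_pos, Finset.card_erase_of_mem hy]
        obtain ⟨z, hz, hzy⟩ := Finset.not_subset.1
          (fun hsub => hρne (Finset.Subset.antisymm hsub (Finset.singleton_subset_iff.2 hy)))
        have h2 : 1 < ρ.card :=
          Finset.one_lt_card.2 ⟨z, hz, y, hy, fun h => hzy (h ▸ Finset.mem_singleton_self y)⟩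
        omega
      · exact ⟨ρ, Finset.mem_filter.2 ⟨hρ, hy⟩⟩
    obtain ⟨σ, hσT, hσmax⟩ := Finset.exists_max_image _ Finset.card hT
    rw [Finset.mem_filter] at hσT
    obtain ⟨hσK, hyσ⟩ := hσT
    have hfree : ∀ ρ ∈ K, σ ⊂ ρ → ρ = insert y σ := by
      intro ρ hρ hsub
      by_cases hy : y ∈ ρ
      · have h1 : σ ⊆ ρ.erase y := Finset.subset_erase.2 ⟨hsub.subset, hyσ⟩
        have h2 : ρ.erase y ∈ K := by
          refine hdc _ hρ _ (Finset.erase_subset _ _) ((hne σ hσK).mono h1)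
        have h3 : (ρ.erase y).card ≤ σ.card :=
          hσmax _ (Finset.mem_filter.2 ⟨h2, Finset.notMem_erase y ρ⟩)
        have h4 : ρ.erase y = σ := (Finset.eq_of_subset_of_card_le h1 h3).symm
        rw [← h4, Finset.insert_erase hy]
      · have : ρ.card ≤ σ.card := hσmax _ (Finset.mem_filter.2 ⟨hρ, hy⟩)
        exact absurd (Finset.card_lt_card hsub) (by omega)
    set K' := (K.erase (insert y σ)).erase σ with hK'
    have hmemK' : ∀ ρ, ρ ∈ K' ↔ ρ ∈ K ∧ ρ ≠ insert y σ ∧ ρ ≠ σ := by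
      intro ρ
      simp only [hK', Finset.mem_erase]
      tauto
    have hstep : ElemSCollapse K K' := by
      refine ⟨insert y σ, hcone σ hσK, σ, hσK, Finset.ssubset_insert hyσ, hfree, rfl⟩
    have hsub' : K' ⊂ K := by
      refine Finset.ssubset_iff_of_subset hstep.subset |>.2 ⟨σ, hσK, ?_⟩
      rw [hmemK']
      tauto
    have hrec : SCollapses K' {({y} : Finset V)} := by
      apply cone_collapses y K'
      · intro ρ hρ τ hτ hτne
        rw [hmemK'] at hρ ⊢
        obtain ⟨hρK, hρ1, hρ2⟩ := hρ
        refine ⟨hdc _ hρK _ hτ hτne, ?_, ?_⟩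
        · intro h
          have : σ ⊂ ρ := lt_of_lt_of_le (Finset.ssubset_insert hyσ : σ < insert y σ)
            (show insert y σ ≤ ρ by rw [← h]; exact hτ)
          exact hρ1 (hfree ρ hρK this)
        · intro h
          by_cases hc : ρ = σ
          · exact hρ2 hc
          · exact hρ1 (hfree ρ hρK (lt_of_le_of_ne
              (show σ ≤ ρ by rw [← h]; exact hτ) (Ne.symm hc)))
      · intro ρ hρ
        exact hne ρ ((hmemK' ρ).1 hρ).1
      · intro ρ hρ
        rw [hmemK'] at hρ ⊢
        obtain ⟨hρK, hρ1, hρ2⟩ := hρ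
        refine ⟨hcone _ hρK, ?_, ?_⟩
        · intro h
          by_cases hyρ : y ∈ ρ
          · rw [Finset.insert_eq_self.2 hyρ] at h
            exact hρ1 h
          · exact hρ2 (insert_injective_lemma hyρ hyσ h)
        · intro h
          exact hyσ (h ▸ Finset.mem_insert_self y ρ)
      · refine ⟨{y}, (hmemK' _).2 ⟨hyK, ?_, ?_⟩⟩
        · intro h
          have : σ ⊆ {y} := h ▸ Finset.subset_insert y σ
          rcases Finset.subset_singleton_iff.1 this with h' | h'
          · exact (hne σ hσK).ne_empty h'
          · exact hyσ (h' ▸ Finset.mem_singleton_self y)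
        · intro h
          exact hyσ (h ▸ Finset.mem_singleton_self y)
    exact Relation.ReflTransGen.head hstep hrec
termination_by K.card
decreasing_by exact Finset.card_lt_card hsub'
end Simp

section Simp2
variable {V : Type*} [DecidableEq V]

lemma mem_coneUnion {x : V} {M L : Finset (Finset V)} {ρ : Finset V} :
    ρ ∈ M ∪ L.image (insert x) ∪ {({x} : Finset V)} ↔
      ρ ∈ M ∨ (∃ s ∈ L, insert x s = ρ) ∨ ρ = {x} := by
  simp only [Finset.mem_union, Finset.mem_image, Finset.mem_singleton]
  exact or_assoc

lemma cone_union_elem (x : V) (M : Finset (Finset V)) (hM : ∀ σ ∈ M, x ∉ σ)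
    {L L' : Finset (Finset V)} (hL : ∀ σ ∈ L, x ∉ σ ∧ σ.Nonempty)
    (h : ElemSCollapse L L') :
    ElemSCollapse (M ∪ L.image (insert x) ∪ {({x} : Finset V)})
      (M ∪ L'.image (insert x) ∪ {({x} : Finset V)}) := by
  obtain ⟨σ, hσ, τ, hτ, hst, hfree, rfl⟩ := h
  obtain ⟨hxσ, hσne⟩ := hL σ hσ
  obtain ⟨hxτ, hτne⟩ := hL τ hτ
  refine ⟨insert x σ, mem_coneUnion.2 (Or.inr (Or.inl ⟨σ, hσ, rfl⟩)),
    insert x τ, mem_coneUnion.2 (Or.inr (Or.inl ⟨τ, hτ, rfl⟩)), ?_, ?_, ?_⟩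
  · constructor
    · exact Finset.insert_subset_insert x hst.subset
    · intro hcon
      have : σ ⊆ τ := by
        intro z hz
        have := hcon (Finset.mem_insert_of_mem hz)
        rcases Finset.mem_insert.1 this with h' | h'
        · exact absurd (h' ▸ hz) hxσ
        · exact h'
      exact hst.2 this
  · intro ρ hρ hsub
    rcases mem_coneUnion.1 hρ with hρM | ⟨s, hs, rfl⟩ | rfl
    · exact absurd (hsub.subset (Finset.mem_insert_self x τ)) (hM ρ hρM)
    · obtain ⟨hxs, _⟩ := hL s hs
      have hτs : τ ⊆ s := by
        intro z hz
        have := hsub.subset (Finset.mem_insert_of_mem hz)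
        rcases Finset.mem_insert.1 this with h' | h'
        · exact absurd (h' ▸ hz) hxτ
        · exact h'
      have : τ ≠ s := by
        rintro rfl
        exact hsub.2 (Finset.Subset.refl _)
      rw [hfree s hs (lt_of_le_of_ne hτs this)]
    · obtain ⟨z, hz⟩ := hτne
      have : z ∈ ({x} : Finset V) := hsub.subset (Finset.mem_insert_of_mem hz)
      exact absurd (Finset.mem_singleton.1 this ▸ hz) hxτ
  · ext ρ
    simp only [Finset.mem_erase, mem_coneUnion]
    constructor
    · rintro (hρM | ⟨s, hs, rfl⟩ | rfl)
      · refine ⟨?_, ?_, Or.inl hρM⟩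
        · rintro rfl; exact hM _ hρM (Finset.mem_insert_self x τ)
        · rintro rfl; exact hM _ hρM (Finset.mem_insert_self x σ)
      · obtain ⟨hsτ', hsσ', hsL'⟩ := hs
        obtain ⟨hxs, _⟩ := hL s hsL'
        refine ⟨?_, ?_, Or.inr (Or.inl ⟨s, hsL', rfl⟩)⟩
        · intro h; exact hsτ' (insert_injective_lemma hxs hxτ h)
        · intro h; exact hsσ' (insert_injective_lemma hxs hxσ h)
      · refine ⟨?_, ?_, Or.inr (Or.inr rfl)⟩
        · intro h
          obtain ⟨z, hz⟩ := hτne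
          have : z ∈ ({x} : Finset V) := h ▸ Finset.mem_insert_of_mem hz
          exact hxτ (Finset.mem_singleton.1 this ▸ hz)
        · intro h
          obtain ⟨z, hz⟩ := hσne
          have : z ∈ ({x} : Finset V) := h ▸ Finset.mem_insert_of_mem hz
          exact hxσ (Finset.mem_singleton.1 this ▸ hz)
    · rintro ⟨hρτ, hρσ, hρM | ⟨s, hs, heq⟩ | rfl⟩
      · exact Or.inl hρM
      · exact Or.inr (Or.inl ⟨s, ⟨fun h => hρτ (by rw [← heq, h]),
          fun h => hρσ (by rw [← heq, h]), hs⟩, heq⟩)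
      · exact Or.inr (Or.inr rfl)

lemma cone_union_collapses (x : V) (M : Finset (Finset V)) (hM : ∀ σ ∈ M, x ∉ σ)
    {L L' : Finset (Finset V)} (hL : ∀ σ ∈ L, x ∉ σ ∧ σ.Nonempty)
    (h : SCollapses L L') :
    SCollapses (M ∪ L.image (insert x) ∪ {({x} : Finset V)})
      (M ∪ L'.image (insert x) ∪ {({x} : Finset V)}) := by
  induction h with
  | refl => exact Relation.ReflTransGen.refl
  | @tail b c hab hbc ih =>
    refine Relation.ReflTransGen.tail ih (cone_union_elem x M hM ?_ hbc)
    intro σ hσ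
    exact hL σ (SCollapses.subset hab hσ)
end Simp2

section OCb
variable {V : Type*} [DecidableEq V]
lemma mem_coneUnion' {x v : V} {M : Finset (Finset V)} {ρ : Finset V} :
    ρ ∈ M ∪ ({insert x {v}} : Finset (Finset V)) ∪ {({x} : Finset V)} ↔
      ρ ∈ M ∨ ρ = insert x {v} ∨ ρ = {x} := by
  simp only [Finset.mem_union, Finset.mem_singleton]
  exact or_assoc
end OCb

section OC
variable {X : Type*} [PartialOrder X] [Fintype X] [DecidableEq X]

lemma mem_oc {A : Set X} {σ : Finset X} :
    σ ∈ orderComplexIn X A ↔ σ.Nonempty ∧ IsChain (· ≤ ·) (σ : Set X) ∧ ↑σ ⊆ A := by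
  classical
  simp [orderComplexIn]

lemma oc_dc {A : Set X} : ∀ σ ∈ orderComplexIn X A, ∀ τ ⊆ σ, τ.Nonempty →
    τ ∈ orderComplexIn X A := by
  intro σ hσ τ hτ hτne
  rw [mem_oc] at hσ ⊢
  exact ⟨hτne, hσ.2.1.mono (Finset.coe_subset.2 hτ), (Finset.coe_subset.2 hτ).trans hσ.2.2⟩

lemma oc_nonempty {A : Set X} : ∀ σ ∈ orderComplexIn X A, σ.Nonempty :=
  fun _ hσ => (mem_oc.1 hσ).1

/-- points of `A` comparable to (and distinct from) `x` -/
def linkSet (A : Set X) (x : X) : Set X := {y | y ∈ A ∧ (y < x ∨ x < y)}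

lemma linkSet_not_mem {A : Set X} {x : X} : x ∉ linkSet A x := by
  rintro ⟨-, h | h⟩ <;> exact lt_irrefl x h

lemma oc_decomp {A : Set X} {x : X} (hx : x ∈ A) :
    orderComplexIn X A = orderComplexIn X (A \ {x}) ∪
      (orderComplexIn X (linkSet A x)).image (insert x) ∪ {({x} : Finset X)} := by
  ext σ
  rw [mem_coneUnion, mem_oc]
  constructor
  · rintro ⟨hne, hch, hsub⟩
    by_cases hxσ : x ∈ σ
    · by_cases h1 : σ = {x}
      · exact Or.inr (Or.inr h1)
      · refine Or.inr (Or.inl ⟨σ.erase x, mem_oc.2 ⟨?_, ?_, ?_⟩, Finset.insert_erase hxσ⟩)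
        · obtain ⟨z, hz, hzx⟩ := Finset.not_subset.1
            (fun hsub' => h1 (Finset.Subset.antisymm hsub'
              (Finset.singleton_subset_iff.2 hxσ)))
          exact ⟨z, Finset.mem_erase.2 ⟨fun h => hzx (h ▸ Finset.mem_singleton_self x), hz⟩⟩
        · exact hch.mono (Finset.coe_subset.2 (Finset.erase_subset _ _))
        · intro z hz
          rw [Finset.coe_erase] at hz
          obtain ⟨hzσ, hzx⟩ := hz
          refine ⟨hsub hzσ, ?_⟩
          have hzx' : z ≠ x := hzx
          rcases hch hzσ (Finset.mem_coe.2 hxσ) hzx' with h | h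
          · exact Or.inl (lt_of_le_of_ne h hzx')
          · exact Or.inr (lt_of_le_of_ne h (Ne.symm hzx'))
    · refine Or.inl (mem_oc.2 ⟨hne, hch, ?_⟩)
      intro z hz
      exact ⟨hsub hz, fun h => hxσ (h ▸ Finset.mem_coe.1 hz)⟩
  · rintro (h | ⟨s, hs, rfl⟩ | rfl)
    · rw [mem_oc] at h
      exact ⟨h.1, h.2.1, h.2.2.trans Set.diff_subset⟩
    · rw [mem_oc] at hs
      obtain ⟨hsne, hsch, hssub⟩ := hs
      refine ⟨Finset.insert_nonempty x s, ?_, ?_⟩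
      · rw [Finset.coe_insert]
        refine hsch.insert ?_
        intro b hb hxb
        rcases (hssub hb).2 with h | h
        · exact Or.inr h.le
        · exact Or.inl h.le
      · rw [Finset.coe_insert]
        rw [Set.insert_subset_iff]
        exact ⟨hx, fun z hz => (hssub hz).1⟩
    · refine ⟨Finset.singleton_nonempty x, ?_, ?_⟩
      · rw [Finset.coe_singleton]
        exact Set.Subsingleton.isChain (Set.subsingleton_singleton)
      · rw [Finset.coe_singleton]
        exact Set.singleton_subset_iff.2 hx

lemma collapse_delete_point {A : Set X} {x : X} (hx : x ∈ A) {v : X}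
    (hlk : SCollapses (orderComplexIn X (linkSet A x)) {({v} : Finset X)}) :
    SCollapses (orderComplexIn X A) (orderComplexIn X (A \ {x})) := by
  have hvlk : ({v} : Finset X) ∈ orderComplexIn X (linkSet A x) :=
    hlk.subset (Finset.mem_singleton_self _)
  have hv : v ∈ linkSet A x := by
    have := (mem_oc.1 hvlk).2.2
    exact this (by simp)
  have hvx : v ≠ x := fun h => linkSet_not_mem (h ▸ hv)
  have hMx : ∀ σ ∈ orderComplexIn X (A \ {x}), x ∉ σ := by
    intro σ hσ hxs
    exact ((mem_oc.1 hσ).2.2 (Finset.mem_coe.2 hxs)).2 rfl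
  have hLx : ∀ σ ∈ orderComplexIn X (linkSet A x), x ∉ σ ∧ σ.Nonempty := by
    intro σ hσ
    refine ⟨fun hxs => linkSet_not_mem ((mem_oc.1 hσ).2.2 (Finset.mem_coe.2 hxs)), (mem_oc.1 hσ).1⟩
  rw [oc_decomp hx]
  have step1 := cone_union_collapses x (orderComplexIn X (A \ {x})) hMx hLx hlk
  refine step1.trans ?_
  -- now collapse the pair ({x,v}, {x})
  have himg : ({({v} : Finset X)} : Finset (Finset X)).image (insert x) = {insert x {v}} := by
    simp
  rw [himg]
  refine Relation.ReflTransGen.single ?_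
  refine ⟨insert x {v}, ?_, {x}, ?_, ?_, ?_, ?_⟩
  · rw [mem_coneUnion']
    exact Or.inr (Or.inl rfl)
  · rw [mem_coneUnion']
    exact Or.inr (Or.inr rfl)
  · constructor
    · intro z hz
      rw [Finset.mem_singleton.1 hz]
      exact Finset.mem_insert_self x _
    · intro hcon
      have := hcon (Finset.mem_insert_of_mem (Finset.mem_singleton_self v))
      exact hvx (Finset.mem_singleton.1 this)
  · intro ρ hρ hsub
    rw [mem_coneUnion'] at hρ
    rcases hρ with hρM | hρ | hρ
    · exact absurd (hsub.subset (Finset.mem_singleton_self x)) (hMx ρ hρM)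
    · exact hρ
    · exact absurd hρ (by rintro rfl; exact hsub.2 (Finset.Subset.refl _))
  · ext ρ
    simp only [Finset.mem_erase, mem_coneUnion']
    constructor
    · intro hρ
      refine ⟨?_, ?_, Or.inl hρ⟩
      · rintro rfl; exact hMx _ hρ (Finset.mem_singleton_self x)
      · rintro rfl; exact hMx _ hρ (Finset.mem_insert_self x _)
    · rintro ⟨h1, h2, hρM | rfl | rfl⟩
      · exact hρM
      · exact absurd rfl h2
      · exact absurd rfl h1
end OC

section Join
variable {X : Type*} [DecidableEq X]

def joinF (L M : Finset (Finset X)) : Finset (Finset X) :=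
  (((insert ∅ L) ×ˢ (insert ∅ M)).image fun p => p.1 ∪ p.2).erase ∅

lemma mem_joinF {L M : Finset (Finset X)} {ρ : Finset X} :
    ρ ∈ joinF L M ↔ ρ ≠ ∅ ∧ ∃ s ∈ insert ∅ L, ∃ t ∈ insert ∅ M, s ∪ t = ρ := by
  simp only [joinF, Finset.mem_erase, Finset.mem_image, Finset.mem_product, Prod.exists]
  constructor
  · rintro ⟨h1, s, t, ⟨hs, ht⟩, h⟩
    exact ⟨h1, s, hs, t, ht, h⟩
  · rintro ⟨h1, s, hs, t, ht, h⟩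
    exact ⟨h1, s, t, ⟨hs, ht⟩, h⟩

lemma split_unique {U F : Set X} (hUF : ∀ a ∈ U, a ∉ F) {s t s' t' : Finset X}
    (hs : ↑s ⊆ U) (ht : ↑t ⊆ F) (hs' : ↑s' ⊆ U) (ht' : ↑t' ⊆ F)
    (h : s ∪ t = s' ∪ t') : s = s' ∧ t = t' := by
  constructor
  · ext z
    constructor
    · intro hz
      rcases Finset.mem_union.1 (h ▸ Finset.mem_union_left t hz) with h2 | h2
      · exact h2
      · exact absurd (ht' h2) (hUF z (hs hz))
    · intro hz
      rcases Finset.mem_union.1 (h.symm ▸ Finset.mem_union_left t' hz) with h2 | h2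
      · exact h2
      · exact absurd (ht h2) (hUF z (hs' hz))
  · ext z
    constructor
    · intro hz
      rcases Finset.mem_union.1 (h ▸ Finset.mem_union_right s hz) with h2 | h2
      · exact absurd (ht hz) (hUF z (hs' h2))
      · exact h2
    · intro hz
      rcases Finset.mem_union.1 (h.symm ▸ Finset.mem_union_right s' hz) with h2 | h2
      · exact absurd (ht' hz) (hUF z (hs h2))
      · exact h2

lemma mem_insert_empty_subset {U : Set X} {L : Finset (Finset X)}
    (hL : ∀ s ∈ L, s.Nonempty ∧ ↑s ⊆ U) {s : Finset X} (hs : s ∈ insert ∅ L) :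
    (s : Set X) ⊆ U := by
  rcases Finset.mem_insert.1 hs with rfl | h
  · simp
  · exact (hL s h).2

lemma joinF_elem_stage {U F : Set X} (hUF : ∀ a ∈ U, a ∉ F) {L M : Finset (Finset X)}
    (hL : ∀ s ∈ L, s.Nonempty ∧ ↑s ⊆ U) (hM : ∀ t ∈ M, t.Nonempty ∧ ↑t ⊆ F)
    {σ τ : Finset X} (hσ : σ ∈ L) (hτ : τ ∈ L) (hst : τ ⊂ σ)
    (hfree : ∀ ρ ∈ L, τ ⊂ ρ → ρ = σ)
    (R : Finset (Finset X)) (hR : R ⊆ insert ∅ M) :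
    SCollapses (joinF ((L.erase σ).erase τ) M ∪ R.image (σ ∪ ·) ∪ R.image (τ ∪ ·))
               (joinF ((L.erase σ).erase τ) M) := by
  rcases R.eq_empty_or_nonempty with rfl | hRne
  · simp only [Finset.image_empty, Finset.union_empty]
    exact Relation.ReflTransGen.refl
  obtain ⟨μ, hμR, hμmax⟩ := Finset.exists_max_image R Finset.card hRne
  set L' := (L.erase σ).erase τ with hL'def
  have hμM : μ ∈ insert ∅ M := hR hμR
  have hμF : ↑μ ⊆ F := mem_insert_empty_subset hM hμM
  have hσU : ↑σ ⊆ U := (hL σ hσ).2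
  have hτU : ↑τ ⊆ U := (hL τ hτ).2
  have hσne : σ.Nonempty := (hL σ hσ).1
  have hτne : τ.Nonempty := (hL τ hτ).1
  have hmemL' : ∀ s, s ∈ insert ∅ L' ↔ s ∈ insert ∅ L ∧ s ≠ σ ∧ s ≠ τ := by
    intro s
    simp only [hL'def, Finset.mem_insert, Finset.mem_erase]
    constructor
    · rintro (rfl | ⟨h1, h2, h3⟩)
      · exact ⟨Or.inl rfl, fun h => hσne.ne_empty h.symm, fun h => hτne.ne_empty h.symm⟩
      · exact ⟨Or.inr h3, h2, h1⟩
    · rintro ⟨rfl | h1, h2, h3⟩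
      · exact Or.inl rfl
      · exact Or.inr ⟨h3, h2, h1⟩
  have hL'sub : ∀ s ∈ insert ∅ L', (s : Set X) ⊆ U := by
    intro s hs
    rcases Finset.mem_insert.1 hs with rfl | h
    · simp
    · exact (hL s (Finset.mem_of_mem_erase (Finset.mem_of_mem_erase h))).2
  have hstage : ∀ (R₀ : Finset (Finset X)) ρ,
      ρ ∈ joinF L' M ∪ R₀.image (σ ∪ ·) ∪ R₀.image (τ ∪ ·) ↔
      ρ ∈ joinF L' M ∨ (∃ μ' ∈ R₀, σ ∪ μ' = ρ) ∨ (∃ μ' ∈ R₀, τ ∪ μ' = ρ) := by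
    intro R₀ ρ
    simp only [Finset.mem_union, Finset.mem_image]
    exact or_assoc
  -- ρ in join part is never of the form σ ∪ μ' or τ ∪ μ'
  have hjoin_ne : ∀ {ρ}, ρ ∈ joinF L' M → ∀ μ', ↑μ' ⊆ F → (σ ∪ μ' ≠ ρ ∧ τ ∪ μ' ≠ ρ) := by
    intro ρ hρ μ' hμ'
    obtain ⟨hρe, s, hsL', t, htM, rfl⟩ := mem_joinF.1 hρ
    have hsU : ↑s ⊆ U := hL'sub s hsL'
    have htF : ↑t ⊆ F := mem_insert_empty_subset hM htM
    obtain ⟨-, hsσ, hsτ⟩ := (hmemL' s).1 hsL'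
    constructor
    · intro h
      exact hsσ ((split_unique hUF hσU hμ' hsU htF h).1.symm)
    · intro h
      exact hsτ ((split_unique hUF hτU hμ' hsU htF h).1.symm)
  have hμne : ∀ μ' ∈ insert ∅ M, ∀ μ'' ∈ insert ∅ M,
      σ ∪ μ' = σ ∪ μ'' → μ' = μ'' := by
    intro μ' h1 μ'' h2 h
    exact (split_unique hUF hσU (mem_insert_empty_subset hM h1) hσU
      (mem_insert_empty_subset hM h2) h).2
  have hμneτ : ∀ μ' ∈ insert ∅ M, ∀ μ'' ∈ insert ∅ M,
      τ ∪ μ' = τ ∪ μ'' → μ' = μ'' := by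
    intro μ' h1 μ'' h2 h
    exact (split_unique hUF hτU (mem_insert_empty_subset hM h1) hτU
      (mem_insert_empty_subset hM h2) h).2
  have hστne : ∀ μ' ∈ insert ∅ M, ∀ μ'' ∈ insert ∅ M, σ ∪ μ' ≠ τ ∪ μ'' := by
    intro μ' h1 μ'' h2 h
    exact hst.ne ((split_unique hUF hσU (mem_insert_empty_subset hM h1) hτU
      (mem_insert_empty_subset hM h2) h).1).symm
  have hτsub : ∀ {s t : Finset X}, ↑s ⊆ U → ↑t ⊆ F → τ ∪ μ ⊆ s ∪ t → τ ⊆ s ∧ μ ⊆ t := by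
    intro s t hsU htF hsub'
    constructor
    · intro z hz
      rcases Finset.mem_union.1 (hsub' (Finset.mem_union_left _ hz)) with h | h
      · exact h
      · exact absurd (htF h) (hUF z (hτU hz))
    · intro z hz
      rcases Finset.mem_union.1 (hsub' (Finset.mem_union_right _ hz)) with h | h
      · exact absurd (hsU h) (fun hc => hUF z hc (hμF hz))
      · exact h
  have hstep : ElemSCollapse (joinF L' M ∪ R.image (σ ∪ ·) ∪ R.image (τ ∪ ·))
      (joinF L' M ∪ (R.erase μ).image (σ ∪ ·) ∪ (R.erase μ).image (τ ∪ ·)) := by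
    refine ⟨σ ∪ μ, (hstage R _).2 (Or.inr (Or.inl ⟨μ, hμR, rfl⟩)),
      τ ∪ μ, (hstage R _).2 (Or.inr (Or.inr ⟨μ, hμR, rfl⟩)), ?_, ?_, ?_⟩
    · constructor
      · exact Finset.union_subset_union_left hst.subset
      · intro hcon
        have : σ ⊆ τ := by
          intro z hz
          rcases Finset.mem_union.1 (hcon (Finset.mem_union_left _ hz)) with h | h
          · exact h
          · exact absurd (hμF h) (hUF z (hσU hz))
        exact hst.2 this
    · -- freeness
      intro ρ hρ hsub
      rcases (hstage R ρ).1 hρ with hρj | ⟨μ', hμ', rfl⟩ | ⟨μ', hμ', rfl⟩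
      · -- join part: contradiction
        exfalso
        obtain ⟨hρe, s, hsL', t, htM, rfl⟩ := mem_joinF.1 hρj
        have hsU : ↑s ⊆ U := hL'sub s hsL'
        have htF : ↑t ⊆ F := mem_insert_empty_subset hM htM
        obtain ⟨hsL, hsσ, hsτ⟩ := (hmemL' s).1 hsL'
        obtain ⟨h1, h2⟩ := hτsub hsU htF hsub.subset
        by_cases hts : τ = s
        · exact hsτ hts.symm
        · have hτs : τ ⊂ s := lt_of_le_of_ne h1 hts
          rcases Finset.mem_insert.1 hsL with rfl | hsL2
          · obtain ⟨z, hz⟩ := hτne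
            exact absurd (hτs.subset hz) (Finset.notMem_empty z)
          · exact hsσ (hfree s hsL2 hτs)
      · -- ρ = σ ∪ μ'
        have hμ'M : μ' ∈ insert ∅ M := hR hμ'
        have hμ'F : ↑μ' ⊆ F := mem_insert_empty_subset hM hμ'M
        obtain ⟨h1, h2⟩ := hτsub hσU hμ'F hsub.subset
        have hμμ' : μ' = μ := Finset.eq_of_subset_of_card_le h2 (hμmax μ' hμ') |>.symm
        rw [hμμ']
      · -- ρ = τ ∪ μ' : contradiction
        exfalso
        have hμ'M : μ' ∈ insert ∅ M := hR hμ'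
        have hμ'F : ↑μ' ⊆ F := mem_insert_empty_subset hM hμ'M
        obtain ⟨h1, h2⟩ := hτsub hτU hμ'F hsub.subset
        have hμμ' : μ' = μ := Finset.eq_of_subset_of_card_le h2 (hμmax μ' hμ') |>.symm
        rw [hμμ'] at hsub
        exact hsub.2 (Finset.Subset.refl _)
    · -- the erase identity
      ext ρ
      simp only [Finset.mem_erase]
      rw [hstage R ρ, hstage (R.erase μ) ρ]
      constructor
      · rintro (hρj | ⟨μ', hμ', rfl⟩ | ⟨μ', hμ', rfl⟩)
        · obtain ⟨h1, h2⟩ := hjoin_ne hρj μ hμF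
          exact ⟨Ne.symm h2, Ne.symm h1, Or.inl hρj⟩
        · obtain ⟨hμ'μ, hμ'R⟩ := Finset.mem_erase.1 hμ'
          refine ⟨fun h => ?_, fun h => ?_, Or.inr (Or.inl ⟨μ', hμ'R, rfl⟩)⟩
          · exact hστne μ' (hR hμ'R) μ hμM h
          · exact hμ'μ (hμne μ' (hR hμ'R) μ hμM h)
        · obtain ⟨hμ'μ, hμ'R⟩ := Finset.mem_erase.1 hμ'
          refine ⟨fun h => ?_, fun h => ?_, Or.inr (Or.inr ⟨μ', hμ'R, rfl⟩)⟩
          · exact hμ'μ (hμneτ μ' (hR hμ'R) μ hμM h)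
          · exact hστne μ (hR hμR) μ' (hR hμ'R) h.symm
      · rintro ⟨hne1, hne2, (hρj | ⟨μ', hμ', rfl⟩ | ⟨μ', hμ', rfl⟩)⟩
        · exact Or.inl hρj
        · exact Or.inr (Or.inl ⟨μ', Finset.mem_erase.2
            ⟨fun h => hne2 (by rw [h]), hμ'⟩, rfl⟩)
        · exact Or.inr (Or.inr ⟨μ', Finset.mem_erase.2
            ⟨fun h => hne1 (by rw [h]), hμ'⟩, rfl⟩)
  refine Relation.ReflTransGen.head hstep ?_
  exact joinF_elem_stage hUF hL hM hσ hτ hst hfree (R.erase μ)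
    ((Finset.erase_subset _ _).trans hR)
termination_by R.card
decreasing_by exact Finset.card_erase_lt_of_mem hμR
end Join

section Join2
variable {X : Type*} [DecidableEq X]

lemma joinF_elem {U F : Set X} (hUF : ∀ a ∈ U, a ∉ F) {L L' M : Finset (Finset X)}
    (hL : ∀ s ∈ L, s.Nonempty ∧ ↑s ⊆ U) (hM : ∀ t ∈ M, t.Nonempty ∧ ↑t ⊆ F)
    (h : ElemSCollapse L L') : SCollapses (joinF L M) (joinF L' M) := by
  obtain ⟨σ, hσ, τ, hτ, hst, hfree, rfl⟩ := h
  have key := joinF_elem_stage hUF hL hM hσ hτ hst hfree (insert ∅ M) (Finset.Subset.refl _)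
  have hid : joinF L M = joinF ((L.erase σ).erase τ) M ∪
      (insert ∅ M).image (σ ∪ ·) ∪ (insert ∅ M).image (τ ∪ ·) := by
    have hσne : σ.Nonempty := (hL σ hσ).1
    have hτne : τ.Nonempty := (hL τ hτ).1
    ext ρ
    simp only [Finset.mem_union, Finset.mem_image]
    rw [mem_joinF, mem_joinF, or_assoc]
    constructor
    · rintro ⟨hne, s, hs, t, ht, rfl⟩
      by_cases h1 : s = σ
      · exact Or.inr (Or.inl ⟨t, ht, by rw [h1]⟩)
      by_cases h2 : s = τ
      · exact Or.inr (Or.inr ⟨t, ht, by rw [h2]⟩)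
      refine Or.inl ⟨hne, s, ?_, t, ht, rfl⟩
      rcases Finset.mem_insert.1 hs with rfl | hs2
      · exact Finset.mem_insert_self _ _
      · exact Finset.mem_insert_of_mem (Finset.mem_erase.2 ⟨h2, Finset.mem_erase.2 ⟨h1, hs2⟩⟩)
    · rintro (⟨hne, s, hs, t, ht, rfl⟩ | ⟨t, ht, rfl⟩ | ⟨t, ht, rfl⟩)
      · refine ⟨hne, s, ?_, t, ht, rfl⟩
        rcases Finset.mem_insert.1 hs with rfl | hs2
        · exact Finset.mem_insert_self _ _
        · exact Finset.mem_insert_of_mem (Finset.mem_of_mem_erase (Finset.mem_of_mem_erase hs2))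
      · refine ⟨?_, σ, Finset.mem_insert_of_mem hσ, t, ht, rfl⟩
        intro h
        obtain ⟨z, hz⟩ := hσne
        exact Finset.notMem_empty z (h ▸ Finset.mem_union_left _ hz)
      · refine ⟨?_, τ, Finset.mem_insert_of_mem hτ, t, ht, rfl⟩
        intro h
        obtain ⟨z, hz⟩ := hτne
        exact Finset.notMem_empty z (h ▸ Finset.mem_union_left _ hz)
  rw [hid]
  exact key

lemma joinF_collapses {U F : Set X} (hUF : ∀ a ∈ U, a ∉ F) {L L' M : Finset (Finset X)}
    (hL : ∀ s ∈ L, s.Nonempty ∧ ↑s ⊆ U) (hM : ∀ t ∈ M, t.Nonempty ∧ ↑t ⊆ F)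
    (h : SCollapses L L') : SCollapses (joinF L M) (joinF L' M) := by
  induction h with
  | refl => exact Relation.ReflTransGen.refl
  | @tail b c hab hbc ih =>
    refine ih.trans (joinF_elem hUF ?_ hM hbc)
    intro s hs
    exact hL s (SCollapses.subset hab hs)

lemma joinF_comm (L M : Finset (Finset X)) : joinF L M = joinF M L := by
  ext ρ
  rw [mem_joinF, mem_joinF]
  constructor
  · rintro ⟨hne, s, hs, t, ht, rfl⟩
    exact ⟨hne, t, ht, s, hs, Finset.union_comm t s⟩
  · rintro ⟨hne, s, hs, t, ht, rfl⟩
    exact ⟨hne, t, ht, s, hs, Finset.union_comm t s⟩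
end Join2

section Join3
variable {X : Type*} [PartialOrder X] [Fintype X] [DecidableEq X]

lemma oc_hyp {U : Set X} : ∀ s ∈ orderComplexIn X U, s.Nonempty ∧ ↑s ⊆ U := by
  intro s hs
  exact ⟨(mem_oc.1 hs).1, (mem_oc.1 hs).2.2⟩

lemma insert_oc_chain {U : Set X} {s : Finset X} (hs : s ∈ insert ∅ (orderComplexIn X U)) :
    IsChain (· ≤ ·) (s : Set X) ∧ ↑s ⊆ U := by
  rcases Finset.mem_insert.1 hs with rfl | h
  · simp [IsChain]
  · exact ⟨(mem_oc.1 h).2.1, (mem_oc.1 h).2.2⟩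

lemma oc_union_eq_joinF {U F : Set X} (hlt : ∀ u ∈ U, ∀ f ∈ F, u < f) :
    orderComplexIn X (U ∪ F) = joinF (orderComplexIn X U) (orderComplexIn X F) := by
  classical
  ext σ
  rw [mem_oc, mem_joinF]
  constructor
  · rintro ⟨hne, hch, hsub⟩
    refine ⟨hne.ne_empty, σ.filter (· ∈ U), ?_, σ.filter (· ∉ U), ?_, ?_⟩
    · rcases (σ.filter (· ∈ U)).eq_empty_or_nonempty with he | hne'
      · rw [he]; exact Finset.mem_insert_self _ _
      · refine Finset.mem_insert_of_mem (mem_oc.2 ⟨hne', ?_, ?_⟩)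
        · exact hch.mono (Finset.coe_subset.2 (Finset.filter_subset _ _))
        · intro z hz
          rw [Finset.coe_filter] at hz
          exact hz.2
    · rcases (σ.filter (· ∉ U)).eq_empty_or_nonempty with he | hne'
      · rw [he]; exact Finset.mem_insert_self _ _
      · refine Finset.mem_insert_of_mem (mem_oc.2 ⟨hne', ?_, ?_⟩)
        · exact hch.mono (Finset.coe_subset.2 (Finset.filter_subset _ _))
        · intro z hz
          rw [Finset.coe_filter] at hz
          rcases hsub hz.1 with h | h
          · exact absurd h hz.2
          · exact h
    · exact Finset.filter_union_filter_not_eq _ σ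
  · rintro ⟨hne, s, hs, t, ht, rfl⟩
    obtain ⟨hsch, hsU⟩ := insert_oc_chain hs
    obtain ⟨htch, htF⟩ := insert_oc_chain ht
    refine ⟨Finset.nonempty_iff_ne_empty.2 hne, ?_, ?_⟩
    · intro a ha b hb hab
      rw [Finset.coe_union] at ha hb
      rcases ha with ha | ha <;> rcases hb with hb | hb
      · exact hsch ha hb hab
      · exact Or.inl (hlt a (hsU ha) b (htF hb)).le
      · exact Or.inr (hlt b (hsU hb) a (htF ha)).le
      · exact htch ha hb hab
    · rw [Finset.coe_union]
      exact Set.union_subset_union hsU htF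

lemma joinF_singleton_eq {G : Set X} {v : X} (hvG : v ∉ G)
    (hcomp : ∀ g ∈ G, g < v ∨ v < g) :
    joinF {({v} : Finset X)} (orderComplexIn X G) = orderComplexIn X (insert v G) := by
  classical
  ext σ
  rw [mem_joinF, mem_oc]
  constructor
  · rintro ⟨hne, s, hs, t, ht, rfl⟩
    obtain ⟨htch, htG⟩ := insert_oc_chain ht
    have hscases : s = ∅ ∨ s = {v} := by
      rcases Finset.mem_insert.1 hs with rfl | h
      · exact Or.inl rfl
      · exact Or.inr (Finset.mem_singleton.1 h)
    rcases hscases with rfl | rfl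
    · rw [Finset.empty_union]
      refine ⟨Finset.nonempty_iff_ne_empty.2 (by simpa using hne), htch, ?_⟩
      exact htG.trans (Set.subset_insert v G)
    · refine ⟨⟨v, Finset.mem_union_left _ (Finset.mem_singleton_self v)⟩, ?_, ?_⟩
      · rw [Finset.coe_union, Finset.coe_singleton]
        intro a ha b hb hab
        rcases ha with ha | ha <;> rcases hb with hb | hb
        · exact absurd (ha.trans hb.symm) hab
        · rw [Set.mem_singleton_iff.1 ha]
          rcases hcomp b (htG hb) with h | h
          · exact Or.inr h.le
          · exact Or.inl h.le
        · rw [Set.mem_singleton_iff.1 hb]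
          rcases hcomp a (htG ha) with h | h
          · exact Or.inl h.le
          · exact Or.inr h.le
        · exact htch ha hb hab
      · rw [Finset.coe_union, Finset.coe_singleton]
        refine Set.union_subset ?_ (htG.trans (Set.subset_insert v G))
        exact Set.singleton_subset_iff.2 (Set.mem_insert v G)
  · rintro ⟨hne, hch, hsub⟩
    by_cases hv : v ∈ σ
    · refine ⟨hne.ne_empty, {v}, Finset.mem_insert_of_mem (Finset.mem_singleton_self _), σ.erase v, ?_, ?_⟩
      · rcases (σ.erase v).eq_empty_or_nonempty with he | hne'
        · rw [he]; exact Finset.mem_insert_self _ _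
        · refine Finset.mem_insert_of_mem (mem_oc.2 ⟨hne', ?_, ?_⟩)
          · exact hch.mono (Finset.coe_subset.2 (Finset.erase_subset _ _))
          · intro z hz
            rw [Finset.coe_erase] at hz
            rcases hsub hz.1 with h | h
            · exact absurd h hz.2
            · exact h
      · rw [show ({v} : Finset X) ∪ σ.erase v = insert v (σ.erase v) from rfl,
          Finset.insert_erase hv]
    · refine ⟨hne.ne_empty, ∅, Finset.mem_insert_self _ _, σ, ?_, Finset.empty_union σ⟩
      refine Finset.mem_insert_of_mem (mem_oc.2 ⟨hne, hch, ?_⟩)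
      intro z hz
      rcases hsub hz with h | h
      · exact absurd h (fun hc => hv ((Set.mem_singleton_iff.1 hc) ▸ hz))
      · exact h

lemma oc_cone {G : Set X} {v : X} (hv : v ∈ G)
    (hcomp : ∀ g ∈ G, g ≠ v → g < v ∨ v < g) :
    SCollapses (orderComplexIn X G) {({v} : Finset X)} := by
  refine cone_collapses v _ oc_dc oc_nonempty ?_ ?_
  · intro σ hσ
    obtain ⟨hne, hch, hsub⟩ := mem_oc.1 hσ
    refine mem_oc.2 ⟨Finset.insert_nonempty _ _, ?_, ?_⟩
    · rw [Finset.coe_insert]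
      refine hch.insert ?_
      intro b hb hvb
      rcases hcomp b (hsub hb) (Ne.symm hvb) with h | h
      · exact Or.inr h.le
      · exact Or.inl h.le
    · rw [Finset.coe_insert]
      exact Set.insert_subset hv hsub
  · refine ⟨{v}, mem_oc.2 ⟨Finset.singleton_nonempty v, ?_, ?_⟩⟩
    · rw [Finset.coe_singleton]
      exact Set.Subsingleton.isChain Set.subsingleton_singleton
    · rw [Finset.coe_singleton]
      exact Set.singleton_subset_iff.2 hv
end Join3

section Final
variable {X : Type*} [PartialOrder X] [Fintype X] [DecidableEq X]

lemma SubContractible.nonempty {A : Set X} (hA : SubContractible A) : A.Nonempty := by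
  letI : TopologicalSpace ↥A := subTop A
  haveI : ContractibleSpace ↥A := hA
  obtain ⟨e⟩ := ContractibleSpace.hequiv_unit ↥A
  exact ⟨(e.invFun ()).1, (e.invFun ()).2⟩

lemma oc_singleton (p : X) : orderComplexIn X {p} = {({p} : Finset X)} := by
  ext σ
  rw [mem_oc, Finset.mem_singleton]
  constructor
  · rintro ⟨hne, -, hsub⟩
    have : σ ⊆ {p} := by
      intro z hz
      exact Finset.mem_singleton.2 (hsub hz)
    rcases Finset.subset_singleton_iff.1 this with rfl | h
    · exact absurd rfl hne.ne_empty
    · exact h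
  · rintro rfl
    refine ⟨Finset.singleton_nonempty p, ?_, ?_⟩
    · rw [Finset.coe_singleton]
      exact Set.Subsingleton.isChain Set.subsingleton_singleton
    · rw [Finset.coe_singleton]

lemma beat_point_collapse {A : Set X} {x : X} (hb : IsBeatIn A x) :
    SCollapses (orderComplexIn X A) (orderComplexIn X (A \ {x})) := by
  obtain ⟨hx, hbeat⟩ := hb
  obtain ⟨y, hy, hcomp⟩ : ∃ y, y ∈ linkSet A x ∧
      ∀ z ∈ linkSet A x, z ≠ y → z < y ∨ y < z := by
    rcases hbeat with ⟨y, ⟨hyA, hyx⟩, hmax⟩ | ⟨y, ⟨hyA, hyx⟩, hmin⟩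
    · refine ⟨y, ⟨hyA, Or.inl hyx⟩, ?_⟩
      rintro z ⟨hzA, hz | hz⟩ hzy
      · exact Or.inl (lt_of_le_of_ne (hmax z hzA hz) hzy)
      · exact Or.inr (hyx.trans hz)
    · refine ⟨y, ⟨hyA, Or.inr hyx⟩, ?_⟩
      rintro z ⟨hzA, hz | hz⟩ hzy
      · exact Or.inl (hz.trans hyx)
      · exact Or.inr (lt_of_le_of_ne (hmin z hzA hz) (Ne.symm hzy))
  exact collapse_delete_point hx (oc_cone hy hcomp)

lemma contractible_oc_collapses :
    ∀ (n : ℕ) (A : Set X), A.ncard ≤ n → SubContractible A →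
      ∃ p ∈ A, SCollapses (orderComplexIn X A) {({p} : Finset X)} := by
  intro n
  induction n with
  | zero =>
    intro A hcard hA
    obtain ⟨p, hp⟩ := hA.nonempty
    have : A.ncard ≠ 0 := by
      intro h
      rw [Set.ncard_eq_zero (Set.toFinite A)] at h
      exact absurd (h ▸ hp) (Set.notMem_empty p)
    omega
  | succ n ih =>
    intro A hcard hA
    by_cases hbp : ∃ x, IsBeatIn A x
    · obtain ⟨x, hb⟩ := hbp
      have hxA : x ∈ A := hb.1
      have h1 : SCollapses (orderComplexIn X A) (orderComplexIn X (A \ {x})) :=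
        beat_point_collapse hb
      have h2 : SubContractible (A \ {x}) := subContractible_diff hb hA
      have h3 : (A \ {x}).ncard ≤ n := by
        have := Set.ncard_diff_singleton_lt_of_mem hxA (Set.toFinite A)
        omega
      obtain ⟨p, hp, h4⟩ := ih (A \ {x}) h3 h2
      exact ⟨p, hp.1, h1.trans h4⟩
    · push_neg at hbp
      obtain ⟨p, rfl⟩ := singleton_of_contractible_no_beat hA hbp
      refine ⟨p, rfl, ?_⟩
      rw [oc_singleton]
      exact Relation.ReflTransGen.refl

lemma weak_point_collapse {A : Set X} {x : X} (hw : IsWeakPointIn A x) :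
    SCollapses (orderComplexIn X A) (orderComplexIn X (A \ {x})) := by
  obtain ⟨hx, hc⟩ := hw
  set U : Set X := {y | y ∈ A ∧ y < x} with hU
  set F : Set X := {y | y ∈ A ∧ x < y} with hF
  have hUFeq : linkSet A x = U ∪ F := by
    ext y
    constructor
    · rintro ⟨hyA, h | h⟩
      · exact Or.inl ⟨hyA, h⟩
      · exact Or.inr ⟨hyA, h⟩
    · rintro (⟨hyA, h⟩ | ⟨hyA, h⟩)
      · exact ⟨hyA, Or.inl h⟩
      · exact ⟨hyA, Or.inr h⟩
  have hlt : ∀ u ∈ U, ∀ f ∈ F, u < f := fun u hu f hf => hu.2.trans hf.2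
  have hdisj : ∀ a ∈ U, a ∉ F := fun a ha haF => absurd (ha.2.trans haF.2) (lt_irrefl _)
  have hdisj' : ∀ a ∈ F, a ∉ U := fun a ha haU => absurd (ha.2.trans haU.2) (lt_irrefl _)
  rcases hc with hcU | hcF
  · obtain ⟨v, hvU, hvcol⟩ := contractible_oc_collapses U.ncard U le_rfl hcU
    have hlk : SCollapses (orderComplexIn X (linkSet A x)) {({v} : Finset X)} := by
      rw [hUFeq, oc_union_eq_joinF hlt]
      have step1 : SCollapses (joinF (orderComplexIn X U) (orderComplexIn X F))
          (joinF {({v} : Finset X)} (orderComplexIn X F)) :=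
        joinF_collapses hdisj oc_hyp oc_hyp hvcol
      refine step1.trans ?_
      rw [joinF_singleton_eq (G := F) (v := v) ?_ ?_]
      · refine oc_cone (Set.mem_insert v F) ?_
        intro g hg hgv
        rcases hg with rfl | hg
        · exact absurd rfl hgv
        · exact Or.inr (hvU.2.trans hg.2)
      · exact fun hvF => absurd (hvU.2.trans hvF.2) (lt_irrefl _)
      · intro g hg
        exact Or.inr (hvU.2.trans hg.2)
    exact collapse_delete_point hx hlk
  · obtain ⟨v, hvF, hvcol⟩ := contractible_oc_collapses F.ncard F le_rfl hcF
    have hlk : SCollapses (orderComplexIn X (linkSet A x)) {({v} : Finset X)} := by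
      rw [hUFeq, oc_union_eq_joinF hlt, joinF_comm]
      have step1 : SCollapses (joinF (orderComplexIn X F) (orderComplexIn X U))
          (joinF {({v} : Finset X)} (orderComplexIn X U)) :=
        joinF_collapses hdisj' oc_hyp oc_hyp hvcol
      refine step1.trans ?_
      rw [joinF_singleton_eq (G := U) (v := v) ?_ ?_]
      · refine oc_cone (Set.mem_insert v U) ?_
        intro g hg hgv
        rcases hg with rfl | hg
        · exact absurd rfl hgv
        · exact Or.inl (hg.2.trans hvF.2)
      · exact fun hvU => absurd (hvU.2.trans hvF.2) (lt_irrefl _)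
      · intro g hg
        exact Or.inl (hg.2.trans hvF.2)
    exact collapse_delete_point hx hlk
end Final


theorem orderComplex_collapses_of_space_collapses (X : Type) [PartialOrder X] [Fintype X]
    [DecidableEq X] (Y : Set X) (h : SpaceCollapses Set.univ Y) :
    SCollapses (orderComplexIn X Set.univ) (orderComplexIn X Y) := by
  induction h with
  | refl => exact Relation.ReflTransGen.refl
  | @tail b c hab hbc ih =>
    obtain ⟨x, hw, rfl⟩ := hbc
    exact ih.trans (weak_point_collapse hw)
end
end
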